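/- arXiv:1205.0576 — 6 statements merged into one kernel-verified Lean document; each statement's English description precedes it below -/
import Mathlib

section
/- Let B be a binomial ring, n a natural number, and F a polynomial functor of degree n from finitely generated free B-modules to B-modules. If F(B^n) is the zero module, then F(M) is the zero module for every finitely generated free B-module M; that is, F is identically zero. -/
open Finset

universe u

variable (B : Type u) [CommRing B] [BinomialRing B]

/-- A finitely generated free `B`-module. -/
structure FGFree (B : Type u) [CommRing B] : Type (u + 1) where
  carrier : Type u
  [isAddCommGroup : AddCommGroup carrier]
  [isModule : Module B carrier]
  [isFree : Module.Free B carrier]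
  [isFinite : Module.Finite B carrier]

attribute [instance] FGFree.isAddCommGroup FGFree.isModule FGFree.isFree FGFree.isFinite

instance : CoeSort (FGFree B) (Type u) := ⟨FGFree.carrier⟩

/-- A (not necessarily additive) functor from f.g. free `B`-modules to `B`-modules. -/
structure ModFunctor (B : Type u) [CommRing B] : Type (u + 1) where
  obj : FGFree B → ModuleCat.{u} B
  map : ∀ {M N : FGFree B}, (M →ₗ[B] N) → (obj M →ₗ[B] obj N)
  map_id : ∀ (M : FGFree B), map (LinearMap.id : M →ₗ[B] M) = LinearMap.id
  map_comp : ∀ {M N P : FGFree B} (f : M →ₗ[B] N) (g : N →ₗ[B] P),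
    map (g ∘ₗ f) = map g ∘ₗ map f

/-- The deviation of a family of homomorphisms: `∑_{I ⊆ [k]} (−1)^{k−|I|} F(∑_{i∈I} α_i)`. -/
noncomputable def ModFunctor.dev (F : ModFunctor B) {M N : FGFree B} {k : ℕ}
    (α : Fin k → (M →ₗ[B] N)) : (F.obj M →ₗ[B] F.obj N) :=
  ∑ I : Finset (Fin k), (-1 : ℤ) ^ (k - I.card) • F.map (∑ i ∈ I, α i)

/-- `F` is polynomial of degree (at most) `n`: every `n`-th deviation vanishes. -/
def ModFunctor.IsPolynomial (F : ModFunctor B) (n : ℕ) : Prop :=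
  ∀ (M N : FGFree B) (α : Fin (n + 1) → (M →ₗ[B] N)), F.dev B α = 0

/-- The `k`-fold deviation `Δ_k F(α) = ∑_{j=0}^{k} (−1)^{k−j} C(k,j) F(j·α)`. -/
noncomputable def ModFunctor.delta (F : ModFunctor B) {M N : FGFree B} (k : ℕ)
    (α : M →ₗ[B] N) : (F.obj M →ₗ[B] F.obj N) :=
  ∑ j ∈ Finset.range (k + 1), ((-1 : ℤ) ^ (k - j) * (k.choose j : ℤ)) • F.map ((j : B) • α)

/-- `F` is numerical of degree (at most) `n`. -/
def ModFunctor.IsNumerical (F : ModFunctor B) (n : ℕ) : Prop :=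
  F.IsPolynomial B n ∧
    ∀ (M N : FGFree B) (α : M →ₗ[B] N) (r : B),
      F.map (r • α) = ∑ k ∈ Finset.range (n + 1), Ring.choose r k • F.delta B k α

/-- The standard free module `B^n`. -/
def FGFree.std (n : ℕ) : FGFree B := ⟨Fin n → B⟩


section Aux

set_option linter.unusedSectionVars false

variable {B}

/-- Retract lemma: if `M` is a retract of `N` and `F.obj N` is subsingleton, so is `F.obj M`. -/
theorem ModFunctor.retract_subsingleton (F : ModFunctor B) {M N : FGFree B}
    (f : M →ₗ[B] N) (g : N →ₗ[B] M) (hgf : g ∘ₗ f = LinearMap.id)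
    (hN : Subsingleton (F.obj N)) : Subsingleton (F.obj M) := by
  constructor
  intro a b
  have key : ∀ x : F.obj M, F.map g (F.map f x) = x := by
    intro x
    have h1 : F.map (g ∘ₗ f) = F.map g ∘ₗ F.map f := F.map_comp f g
    rw [hgf, F.map_id] at h1
    exact (congrArg (fun φ : F.obj M →ₗ[B] F.obj M => φ x) h1.symm)
  calc a = F.map g (F.map f a) := (key a).symm
    _ = F.map g (F.map f b) := by rw [Subsingleton.elim (F.map f a) (F.map f b)]
    _ = b := key b

/-- If a map factors through an object on which `F` vanishes, `F` of that map is zero. -/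
theorem ModFunctor.map_factor_zero (F : ModFunctor B) {M N P : FGFree B}
    (f : M →ₗ[B] P) (g : P →ₗ[B] N) (hP : Subsingleton (F.obj P)) :
    F.map (g ∘ₗ f) = 0 := by
  ext x
  rw [F.map_comp]
  simp only [LinearMap.coe_comp, Function.comp_apply, LinearMap.zero_apply]
  rw [Subsingleton.elim (F.map f x) 0, map_zero]

/-- Extension by zero from coordinates in `S`. -/
def extSubset {m : ℕ} (S : Finset (Fin m)) : (↥S → B) →ₗ[B] (Fin m → B) where
  toFun v j := if h : j ∈ S then v ⟨j, h⟩ else 0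
  map_add' v w := by funext j; by_cases h : j ∈ S <;> simp [h]
  map_smul' r v := by funext j; by_cases h : j ∈ S <;> simp [h]

/-- Restriction to coordinates in `S`. -/
def resSubset {m : ℕ} (S : Finset (Fin m)) : (Fin m → B) →ₗ[B] (↥S → B) :=
  LinearMap.funLeft B B Subtype.val

/-- Extension by zero along `Fin k ≤ Fin n`. -/
def extLE {k n : ℕ} (hk : k ≤ n) : (Fin k → B) →ₗ[B] (Fin n → B) where
  toFun v j := if h : (j : ℕ) < k then v ⟨j, h⟩ else 0
  map_add' v w := by funext j; by_cases h : (j : ℕ) < k <;> simp [h]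
  map_smul' r v := by funext j; by_cases h : (j : ℕ) < k <;> simp [h]

/-- The f.g. free module of functions on a finset of coordinates. -/
def FGFree.sub {m : ℕ} (S : Finset (Fin m)) : FGFree B := ⟨↥S → B⟩

theorem subsingleton_std_of_le (F : ModFunctor B) {k n : ℕ} (hk : k ≤ n)
    (h : Subsingleton (F.obj (FGFree.std B n))) :
    Subsingleton (F.obj (FGFree.std B k)) := by
  refine F.retract_subsingleton (M := FGFree.std B k) (N := FGFree.std B n)
    (extLE hk) (LinearMap.funLeft B B (Fin.castLE hk)) ?_ h
  refine LinearMap.ext fun v => funext fun j => ?_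
  show extLE (B := B) hk v (Fin.castLE hk j) = v j
  simp [extLE, Fin.castLE, j.isLt]

theorem subsingleton_sub (F : ModFunctor B) {m : ℕ} (S : Finset (Fin m))
    (h : Subsingleton (F.obj (FGFree.std B S.card))) :
    Subsingleton (F.obj (FGFree.sub S)) := by
  have e : ↥S ≃ Fin S.card := S.equivFin
  refine F.retract_subsingleton (M := FGFree.sub S) (N := FGFree.std B S.card)
    (LinearMap.funLeft B B ⇑e.symm) (LinearMap.funLeft B B ⇑e) ?_ h
  refine LinearMap.ext fun v => funext fun s => ?_
  show v (e.symm (e s)) = v s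
  simp

theorem std_subsingleton (n : ℕ) (F : ModFunctor B) (hF : F.IsPolynomial B n)
    (h : Subsingleton (F.obj (FGFree.std B n))) (m : ℕ) :
    Subsingleton (F.obj (FGFree.std B m)) := by
  induction m using Nat.strong_induction_on with
  | _ m ih =>
    rcases le_or_gt m n with hm | hm
    · exact subsingleton_std_of_le F hm h
    · -- m ≥ n + 1
      set c : Fin m → Fin (n + 1) := fun j => ⟨min (j : ℕ) n, by omega⟩ with hc
      have hcsurj : Function.Surjective c := by
        intro i
        refine ⟨⟨(i : ℕ), by omega⟩, ?_⟩
        simp only [hc]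
        ext
        simp [Nat.min_eq_left (Nat.le_of_lt_succ i.isLt)]
      set S : Finset (Fin (n + 1)) → Finset (Fin m) :=
        fun I => Finset.univ.filter (fun j => c j ∈ I) with hS
      set α : Fin (n + 1) → ((Fin m → B) →ₗ[B] (Fin m → B)) :=
        fun i => extSubset (S {i}) ∘ₗ resSubset (S {i}) with hα
      have hαapply : ∀ i (v : Fin m → B) j, α i v j = if c j = i then v j else 0 := by
        intro i v j
        simp only [hα, LinearMap.coe_comp, Function.comp_apply]
        by_cases hij : j ∈ S {i}
        · have hcj : c j = i := by
            have := hij; rw [hS] at this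
            simpa using this
          simp [extSubset, resSubset, LinearMap.funLeft, hij, hcj]
        · have hcj : ¬ c j = i := by
            have := hij; rw [hS] at this
            simpa using this
          simp [extSubset, resSubset, LinearMap.funLeft, hij, hcj]
      have hsum : ∀ I : Finset (Fin (n + 1)),
          (∑ i ∈ I, α i) = extSubset (S I) ∘ₗ resSubset (S I) := by
        intro I
        refine LinearMap.ext fun v => ?_
        funext j
        simp only [LinearMap.coe_sum, Finset.sum_apply, LinearMap.coe_comp,
          Function.comp_apply]
        rw [Finset.sum_congr rfl fun i _ => hαapply i v j,
          Finset.sum_ite_eq I (c j) fun _ => v j]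
        by_cases hj : c j ∈ I
        · have hjS : j ∈ S I := by rw [hS]; simp [hj]
          simp [extSubset, resSubset, LinearMap.funLeft, hj, hjS]
        · have hjS : j ∉ S I := by rw [hS]; simp [hj]
          simp [extSubset, resSubset, LinearMap.funLeft, hj, hjS]
      have hzero : ∀ I : Finset (Fin (n + 1)), I ≠ Finset.univ →
          F.map (M := FGFree.std B m) (N := FGFree.std B m) (∑ i ∈ I, α i) = 0 := by
        intro I hI
        erw [hsum I]
        refine F.map_factor_zero (M := FGFree.std B m) (N := FGFree.std B m)
          (P := FGFree.sub (S I)) (resSubset (S I)) (extSubset (S I)) ?_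
        refine subsingleton_sub F (S I) (ih (S I).card ?_)
        have hne : S I ≠ Finset.univ := by
          intro hSu
          obtain ⟨i, hi⟩ : ∃ i : Fin (n + 1), i ∉ I := by
            by_contra hcon
            push_neg at hcon
            exact hI (Finset.eq_univ_iff_forall.2 hcon)
          obtain ⟨j, hj⟩ := hcsurj i
          have hjm : j ∈ S I := hSu ▸ Finset.mem_univ j
          rw [hS] at hjm
          simp only [Finset.mem_filter, Finset.mem_univ, true_and] at hjm
          rw [hj] at hjm
          exact hi hjm
        calc (S I).card < (Finset.univ : Finset (Fin m)).card :=
              Finset.card_lt_card (Finset.ssubset_univ_iff.2 hne)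
          _ = m := by simp
      have hdev := hF (FGFree.std B m) (FGFree.std B m) α
      unfold ModFunctor.dev at hdev
      rw [Finset.sum_eq_single (Finset.univ : Finset (Fin (n + 1)))
        (fun I _ hI => by rw [hzero I hI, smul_zero])
        (fun hu => absurd (Finset.mem_univ _) hu)] at hdev
      have hid : (∑ i ∈ (Finset.univ : Finset (Fin (n + 1))), α i) = LinearMap.id := by
        rw [hsum]
        refine LinearMap.ext fun v => ?_
        funext j
        have hj : j ∈ S Finset.univ := by rw [hS]; simp
        simp [extSubset, resSubset, LinearMap.funLeft, hj]
      erw [hid, F.map_id] at hdev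
      simp only [Finset.card_univ, Fintype.card_fin, Nat.sub_self, pow_zero, one_smul] at hdev
      constructor
      intro a b
      calc a = LinearMap.id a := rfl
        _ = (0 : F.obj (FGFree.std B m) →ₗ[B] F.obj (FGFree.std B m)) a := by rw [hdev]
        _ = (0 : F.obj (FGFree.std B m) →ₗ[B] F.obj (FGFree.std B m)) b := rfl
        _ = LinearMap.id b := by rw [hdev]
        _ = b := rfl

end Aux

/-- A polynomial functor of degree `n` that vanishes on `B^n` is identically zero. -/
theorem polynomial_functor_vanishing (B : Type u) [CommRing B] [BinomialRing B]
    (n : ℕ) (F : ModFunctor B) (hF : F.IsPolynomial B n)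
    (h : Subsingleton (F.obj (FGFree.std B n))) :
    ∀ M : FGFree B, Subsingleton (F.obj M) := by
  intro M
  let b := Module.Free.chooseBasis B M.carrier
  let ι := Module.Free.ChooseBasisIndex B M.carrier
  let e : M.carrier ≃ₗ[B] (ι → B) := b.equivFun
  let q : ι ≃ Fin (Fintype.card ι) := Fintype.equivFin ι
  refine F.retract_subsingleton (M := M) (N := FGFree.std B (Fintype.card ι))
    ((LinearMap.funLeft B B ⇑q.symm) ∘ₗ (e : M.carrier →ₗ[B] (ι → B)))
    ((e.symm : (ι → B) →ₗ[B] M.carrier) ∘ₗ (LinearMap.funLeft B B ⇑q)) ?_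
    (std_subsingleton n F hF h (Fintype.card ι))
  refine LinearMap.ext fun x => ?_
  show e.symm (((e x) ∘ ⇑q.symm) ∘ ⇑q) = x
  have hcomp : ((e x) ∘ ⇑q.symm) ∘ ⇑q = e x := by
    funext i; simp [Function.comp]
  rw [hcomp]
  exact e.symm_apply_apply x
end

section
/- Let B be a binomial ring, M a B-module, and n a natural number. The divided power map γ_n : x ↦ x^{[n]} is numerical of degree n; that is: (1) for all x_1,…,x_{n+1} ∈ M, ∑_{I ⊆ {1,…,n+1}} (−1)^{n+1−|I|} (∑_{i∈I} x_i)^{[n]} = 0 in the divided power algebra; and (2) for all r ∈ B and x ∈ M, (r·x)^{[n]} = ∑_{k=0}^{n} binom(r,k) · (∑_{j=0}^{k} (−1)^{k−j} binom(k,j) (j·x)^{[n]}). -/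
open Finset MvPolynomial

universe u

variable (B : Type u) [CommRing B] (M : Type u) [AddCommGroup M] [Module B M]

/-- The relations defining the divided power algebra of a module. -/
inductive DividedPowerAlgebra'.Rel :
    MvPolynomial (ℕ × M) B → MvPolynomial (ℕ × M) B → Prop
  | zero {m : M} : Rel (X (0, m)) 1
  | smul {r : B} {n : ℕ} {m : M} : Rel (X (n, r • m)) (C (r ^ n) * X (n, m))
  | mul {n p : ℕ} {m : M} :
      Rel (X (n, m) * X (p, m)) (C ((n + p).choose n : B) * X (n + p, m))
  | add {n : ℕ} {m m' : M} :
      Rel (X (n, m + m')) (∑ ij ∈ Finset.HasAntidiagonal.antidiagonal n, X (ij.1, m) * X (ij.2, m'))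

/-- The divided power algebra `Γ(M)` of a `B`-module `M`. -/
def DividedPowerAlgebra' : Type u := RingQuot (DividedPowerAlgebra'.Rel B M)

namespace DividedPowerAlgebra'

noncomputable instance : CommRing (DividedPowerAlgebra' B M) :=
  inferInstanceAs (CommRing (RingQuot (Rel B M)))

noncomputable instance : Algebra B (DividedPowerAlgebra' B M) :=
  inferInstanceAs (Algebra B (RingQuot (Rel B M)))

/-- The divided power `x^{[n]} = dp n x` in the divided power algebra. -/
noncomputable def dp (n : ℕ) (x : M) : DividedPowerAlgebra' B M :=
  RingQuot.mkAlgHom B (Rel B M) (X (n, x))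

/-- The degree-`n` graded component `Γ^n(M)` of the divided power algebra. -/
noncomputable def grade (n : ℕ) : Submodule B (DividedPowerAlgebra' B M) :=
  Submodule.span B
    {u | ∃ (k : ℕ) (d : Fin k → ℕ) (x : Fin k → M), (∑ i, d i) = n ∧ u = ∏ i, dp B M (d i) (x i)}

theorem dp_mem_grade (n : ℕ) (x : M) : dp B M n x ∈ grade B M n :=
  Submodule.subset_span ⟨1, fun _ => n, fun _ => x, by simp, by simp⟩

end DividedPowerAlgebra'

namespace DividedPowerAlgebra'
variable {B M}
theorem dp_zero (m : M) : dp B M 0 m = 1 := by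
  rw [dp, RingQuot.mkAlgHom_rel B Rel.zero, map_one]
  rfl

theorem dp_smul (r : B) (k : ℕ) (m : M) : dp B M k (r • m) = r ^ k • dp B M k m := by
  rw [dp, RingQuot.mkAlgHom_rel B Rel.smul, map_mul, ← dp, Algebra.smul_def]
  congr 1
  rw [← MvPolynomial.algebraMap_eq, AlgHom.commutes]
  rfl

theorem dp_add (k : ℕ) (m m' : M) :
    dp B M k (m + m') = ∑ ij ∈ Finset.HasAntidiagonal.antidiagonal k, dp B M ij.1 m * dp B M ij.2 m' := by
  rw [dp, RingQuot.mkAlgHom_rel B Rel.add, map_sum]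
  simp [dp]
  rfl
theorem dp_null (k : ℕ) : dp B M k (0 : M) = if k = 0 then 1 else 0 := by
  split_ifs with h
  · subst h; exact dp_zero 0
  · have := dp_smul (B := B) (M := M) 0 k (0 : M)
    rw [zero_smul, zero_pow h, zero_smul] at this
    exact this

theorem dp_sum (k : ℕ) {ι : Type} [DecidableEq ι] (s : Finset ι) (x : ι → M) :
    dp B M k (∑ i ∈ s, x i) = ∑ d ∈ s.piAntidiag k, ∏ i ∈ s, dp B M (d i) (x i) := by
  induction s using Finset.cons_induction generalizing k with
  | empty =>
      simp only [Finset.sum_empty, dp_null, Finset.piAntidiag_empty, Finset.prod_empty]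
      split_ifs <;> simp
  | cons a s ha ih =>
      rw [Finset.sum_cons, dp_add, Finset.piAntidiag_cons ha k, Finset.sum_disjiUnion]
      refine Finset.sum_congr rfl fun p hp => ?_
      rw [Finset.sum_map, ih, Finset.mul_sum]
      refine Finset.sum_congr rfl fun d hd => ?_
      simp only [Finset.mem_piAntidiag] at hd
      have hda : d a = 0 := by
        by_contra h
        exact ha (hd.2 a h)
      rw [Finset.prod_cons]
      simp only [addRightEmbedding_apply]
      have h1 : (d + fun t => if t = a then p.1 else 0) a = p.1 := by simp [hda]
      rw [h1]
      congr 1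
      refine Finset.prod_congr rfl fun i hi => ?_
      have : (d + fun t => if t = a then p.1 else 0) i = d i := by
        simp [ne_of_mem_of_not_mem hi ha]
      rw [this]
theorem aux_sign_sum {α : Type} [Fintype α] [DecidableEq α] (S : Finset α) (hS : S ≠ Finset.univ) :
    ∑ I : Finset α, (if S ⊆ I then ((-1 : ℤ) ^ (Fintype.card α - I.card)) else 0) = 0 := by
  classical
  rw [← Finset.sum_filter]
  have hbij : ∀ I ∈ Finset.filter (fun I => S ⊆ I) Finset.univ, I \ S ∈ Sᶜ.powerset := by
    intro I hI
    simp only [Finset.mem_powerset, Finset.subset_compl_comm]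
    intro a haS
    simp [Finset.mem_sdiff, haS]
  have key : ∑ I ∈ Finset.filter (fun I => S ⊆ I) Finset.univ,
      ((-1 : ℤ) ^ (Fintype.card α - I.card)) =
      ∑ J ∈ Sᶜ.powerset, (-1 : ℤ) ^ (Sᶜ.card - J.card) := by
    refine Finset.sum_nbij' (fun I => I \ S) (fun J => J ∪ S) ?_ ?_ ?_ ?_ ?_
    · intro I hI
      simp only [Finset.mem_filter] at hI
      simp only [Finset.mem_powerset]
      intro a ha
      simp only [Finset.mem_sdiff] at ha
      simp [Finset.mem_compl, ha.2]
    · intro J hJ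
      simp only [Finset.mem_powerset] at hJ
      simp only [Finset.mem_filter, Finset.mem_univ, true_and]
      exact Finset.subset_union_right
    · intro I hI
      simp only [Finset.mem_filter] at hI
      exact Finset.sdiff_union_of_subset hI.2
    · intro J hJ
      simp only [Finset.mem_powerset] at hJ
      show (J ∪ S) \ S = J
      rw [Finset.union_sdiff_right]
      exact Finset.sdiff_eq_self_of_disjoint (Finset.disjoint_left.2 fun a ha => by
        have := hJ ha; simp only [Finset.mem_compl] at this; exact this)
    · intro I hI
      simp only [Finset.mem_filter] at hI
      show (-1 : ℤ) ^ (Fintype.card α - I.card) = (-1 : ℤ) ^ (Sᶜ.card - (I \ S).card)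
      have hSI : S.card ≤ I.card := Finset.card_le_card hI.2
      have hIu : I.card ≤ Fintype.card α := Finset.card_le_univ I
      rw [Finset.card_sdiff_of_subset hI.2, Finset.card_compl]
      congr 1
      omega
  rw [key]
  have hm : Sᶜ.Nonempty := by
    rw [← Finset.card_pos, Finset.card_compl]
    have : S.card < Fintype.card α := by
      refine lt_of_le_of_ne (Finset.card_le_univ S) fun h => hS ?_
      exact Finset.eq_univ_of_card S h
    omega
  have : ∑ J ∈ Sᶜ.powerset, (-1 : ℤ) ^ (Sᶜ.card - J.card)
      = (-1 : ℤ) ^ Sᶜ.card * ∑ J ∈ Sᶜ.powerset, (-1 : ℤ) ^ J.card := by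
    rw [Finset.mul_sum]
    refine Finset.sum_congr rfl fun J hJ => ?_
    have hJc : J.card ≤ Sᶜ.card := Finset.card_le_card (Finset.mem_powerset.1 hJ)
    rw [← pow_add, show Sᶜ.card + J.card = (Sᶜ.card - J.card) + 2 * J.card by omega,
      pow_add, pow_mul, neg_one_sq, one_pow, mul_one]
  rw [this, Finset.sum_powerset_neg_one_pow_card, if_neg (Finset.nonempty_iff_ne_empty.1 hm),
    mul_zero]
theorem filter_ne_subset_iff {α : Type} [Fintype α] [DecidableEq α] (d : α → ℕ) (I : Finset α) :
    ((Finset.univ.filter fun i => d i ≠ 0) ⊆ I) ↔ ∀ i, d i ≠ 0 → i ∈ I := by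
  constructor
  · intro h i hi; exact h (Finset.mem_filter.2 ⟨Finset.mem_univ i, hi⟩)
  · intro h i hi; exact h i (Finset.mem_filter.1 hi).2

theorem piAntidiag_eq_filter {α : Type} [Fintype α] [DecidableEq α] (I : Finset α) (n : ℕ) :
    I.piAntidiag n = (Finset.univ.piAntidiag n).filter
      (fun d => (Finset.univ.filter fun i => d i ≠ 0) ⊆ I) := by
  ext d
  simp only [Finset.mem_piAntidiag, Finset.mem_filter, Finset.mem_univ, implies_true,
    and_true, true_and, ne_eq, filter_ne_subset_iff]
  have hsum : (∀ i, ¬ d i = 0 → i ∈ I) → I.sum d = Finset.univ.sum d := fun hsupp =>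
    Finset.sum_subset (Finset.subset_univ I) fun i _ hi => by
      by_contra h; exact hi (hsupp i h)
  constructor
  · rintro ⟨h1, h2⟩
    exact ⟨by rw [← hsum h2]; exact h1, h2⟩
  · rintro ⟨h1, h2⟩
    exact ⟨by rw [hsum h2]; exact h1, h2⟩

theorem deviation_zero {n : ℕ} (x : Fin (n + 1) → M) :
    (∑ I : Finset (Fin (n + 1)), (-1 : ℤ) ^ (n + 1 - I.card) • dp B M n (∑ i ∈ I, x i)) = 0 := by
  classical
  have h1 : ∀ I : Finset (Fin (n + 1)), dp B M n (∑ i ∈ I, x i)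
      = ∑ d ∈ I.piAntidiag n, ∏ i, dp B M (d i) (x i) := by
    intro I
    rw [dp_sum]
    refine Finset.sum_congr rfl fun d hd => ?_
    simp only [Finset.mem_piAntidiag] at hd
    exact Finset.prod_subset (Finset.subset_univ I) (fun i _ hi => by
      have : d i = 0 := by by_contra h; exact hi (hd.2 i h)
      rw [this, dp_zero])
  calc ∑ I : Finset (Fin (n + 1)), (-1 : ℤ) ^ (n + 1 - I.card) • dp B M n (∑ i ∈ I, x i)
      = ∑ I : Finset (Fin (n + 1)), ∑ d ∈ Finset.univ.piAntidiag n,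
          (if (Finset.univ.filter fun i => d i ≠ 0) ⊆ I then
            (-1 : ℤ) ^ (n + 1 - I.card) • ∏ i, dp B M (d i) (x i) else 0) := by
        refine Finset.sum_congr rfl fun I _ => ?_
        rw [h1 I, piAntidiag_eq_filter, Finset.sum_filter, Finset.smul_sum]
        refine Finset.sum_congr rfl fun d _ => ?_
        rw [smul_ite, smul_zero]
    _ = ∑ d ∈ Finset.univ.piAntidiag n,
          (∑ I : Finset (Fin (n + 1)), if (Finset.univ.filter fun i => d i ≠ 0) ⊆ I then
            ((-1 : ℤ) ^ (n + 1 - I.card)) else 0) • ∏ i, dp B M (d i) (x i) := by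
        rw [Finset.sum_comm]
        refine Finset.sum_congr rfl fun d _ => ?_
        rw [Finset.sum_smul]
        refine Finset.sum_congr rfl fun I _ => ?_
        rw [ite_smul, zero_smul]
    _ = 0 := by
        refine Finset.sum_eq_zero fun d hd => ?_
        have hS : (Finset.univ.filter fun i => d i ≠ 0) ≠ Finset.univ := by
          intro h
          have hall : ∀ i : Fin (n + 1), d i ≠ 0 := by
            intro i
            rw [Finset.eq_univ_iff_forall] at h
            exact (Finset.mem_filter.1 (h i)).2
          have hsum : Finset.univ.sum d = n := (Finset.mem_piAntidiag.1 hd).1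
          have hle : ∑ _i : Fin (n + 1), 1 ≤ Finset.univ.sum d :=
            Finset.sum_le_sum fun i _ => Nat.one_le_iff_ne_zero.2 (hall i)
          simp only [Finset.sum_const, Finset.card_univ, Fintype.card_fin, smul_eq_mul,
            mul_one] at hle
          omega
        have haux := aux_sign_sum (Finset.univ.filter fun i => d i ≠ 0) hS
        simp only [Fintype.card_fin] at haux
        rw [haux, zero_smul]
end DividedPowerAlgebra'
/-- Stirling numbers of the second kind. -/
def stirl : ℕ → ℕ → ℕ
  | 0, 0 => 1
  | 0, _ + 1 => 0
  | _ + 1, 0 => 0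
  | n + 1, k + 1 => (k + 1) * stirl n (k + 1) + stirl n k

theorem stirl_eq_zero : ∀ {n k : ℕ}, n < k → stirl n k = 0 := by
  intro n
  induction n with
  | zero => intro k hk; cases k with | zero => omega | succ k => rfl
  | succ n ih =>
      intro k hk
      cases k with
      | zero => omega
      | succ k =>
          show (k + 1) * stirl n (k + 1) + stirl n k = 0
          rw [ih (by omega), ih (by omega), mul_zero]

theorem mul_descPochhammer_smeval {R : Type*} [CommRing R] (r : R) (m : ℕ) :
    r * (descPochhammer ℤ m).smeval r
      = (descPochhammer ℤ (m + 1)).smeval r + m • (descPochhammer ℤ m).smeval r := by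
  rw [descPochhammer_succ_right, Polynomial.smeval_mul, Polynomial.smeval_sub,
    Polynomial.smeval_X, Polynomial.smeval_natCast]
  simp only [pow_one, pow_zero, nsmul_eq_mul, mul_one]
  ring

theorem pow_eq_sum_stirl {R : Type*} [CommRing R] (r : R) (n : ℕ) :
    r ^ n = ∑ m ∈ Finset.range (n + 1), stirl n m • (descPochhammer ℤ m).smeval r := by
  induction n with
  | zero => simp [stirl, descPochhammer_zero, Polynomial.smeval_one]
  | succ n ih =>
      have step : ∀ m : ℕ, stirl n m • (r * (descPochhammer ℤ m).smeval r)
          = stirl n m • (descPochhammer ℤ (m + 1)).smeval r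
            + (m * stirl n m) • (descPochhammer ℤ m).smeval r := by
        intro m
        rw [mul_descPochhammer_smeval, smul_add, ← smul_assoc, smul_eq_mul, mul_comm (stirl n m) m]
      calc r ^ (n + 1) = r ^ n * r := pow_succ r n
        _ = ∑ m ∈ Finset.range (n + 1), stirl n m • (r * (descPochhammer ℤ m).smeval r) := by
            rw [ih, Finset.sum_mul]
            exact Finset.sum_congr rfl fun m _ => by rw [smul_mul_assoc, mul_comm]
        _ = (∑ m ∈ Finset.range (n + 1), stirl n m • (descPochhammer ℤ (m + 1)).smeval r)
            + ∑ m ∈ Finset.range (n + 1), (m * stirl n m) • (descPochhammer ℤ m).smeval r := by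
            rw [← Finset.sum_add_distrib]
            exact Finset.sum_congr rfl fun m _ => step m
        _ = ∑ m ∈ Finset.range (n + 2), stirl (n + 1) m • (descPochhammer ℤ m).smeval r := by
            rw [Finset.sum_range_succ' (fun m => stirl (n + 1) m • (descPochhammer ℤ m).smeval r)
              (n + 1)]
            have h0 : stirl (n + 1) 0 • (descPochhammer ℤ 0).smeval r = 0 := by
              show (0 : ℕ) • _ = 0
              rw [zero_smul]
            rw [h0, add_zero]
            have hsucc : ∀ m, stirl (n + 1) (m + 1) = (m + 1) * stirl n (m + 1) + stirl n m := by
              intro m; rfl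
            have : ∑ m ∈ Finset.range (n + 1),
                stirl (n + 1) (m + 1) • (descPochhammer ℤ (m + 1)).smeval r
                = ∑ m ∈ Finset.range (n + 1),
                  (((m + 1) * stirl n (m + 1)) • (descPochhammer ℤ (m + 1)).smeval r
                    + stirl n m • (descPochhammer ℤ (m + 1)).smeval r) := by
              refine Finset.sum_congr rfl fun m _ => ?_
              rw [hsucc, add_smul]
            rw [this, Finset.sum_add_distrib, add_comm]
            congr 1
            -- ∑_{m ∈ range (n+1)} (m * stirl n m) • desc_m = ∑_{m ∈ range (n+1)} ((m+1) * stirl n (m+1)) • desc_{m+1}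
            rw [Finset.sum_range_succ' (fun m => (m * stirl n m) • (descPochhammer ℤ m).smeval r) n]
            simp only [zero_mul, zero_smul, add_zero]
            rw [Finset.sum_range_succ]
            rw [stirl_eq_zero (Nat.lt_succ_self n), mul_zero, zero_smul, add_zero]
theorem choose_orthogonality (k m : ℕ) :
    ∑ j ∈ Finset.range (k + 1), (-1 : ℤ) ^ (k - j) * (k.choose j : ℤ) * (j.choose m : ℤ)
      = if m = k then 1 else 0 := by
  by_cases hmk : k < m
  · rw [if_neg (by omega)]
    refine Finset.sum_eq_zero fun j hj => ?_
    rw [Finset.mem_range] at hj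
    rw [Nat.choose_eq_zero_of_lt (show j < m by omega), Nat.cast_zero, mul_zero]
  · push_neg at hmk
    have hsplit := Finset.sum_range_add_sum_Ico
      (fun j => (-1 : ℤ) ^ (k - j) * (k.choose j : ℤ) * (j.choose m : ℤ))
      (show m ≤ k + 1 by omega)
    rw [← hsplit]
    have hz : ∑ j ∈ Finset.range m, (-1 : ℤ) ^ (k - j) * (k.choose j : ℤ) * (j.choose m : ℤ)
        = 0 := by
      refine Finset.sum_eq_zero fun j hj => ?_
      rw [Finset.mem_range] at hj
      rw [Nat.choose_eq_zero_of_lt hj, Nat.cast_zero, mul_zero]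
    rw [hz, zero_add, Finset.sum_Ico_eq_sum_range]
    have hrange : k + 1 - m = (k - m) + 1 := by omega
    rw [hrange]
    have hterm : ∀ i ∈ Finset.range ((k - m) + 1),
        (-1 : ℤ) ^ (k - (m + i)) * (k.choose (m + i) : ℤ) * ((m + i).choose m : ℤ)
          = (k.choose m : ℤ) * ((-1 : ℤ) ^ (k - m) * ((-1 : ℤ) ^ i * ((k - m).choose i : ℤ))) := by
      intro i hi
      rw [Finset.mem_range] at hi
      have hik : m + i ≤ k := by omega
      have hcm : k.choose (m + i) * (m + i).choose m = k.choose m * (k - m).choose i := by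
        rw [Nat.choose_mul (n := k) (Nat.le_add_right m i), Nat.add_sub_cancel_left]
      have h3 : (-1 : ℤ) ^ (k - (m + i)) = (-1 : ℤ) ^ (k - m) * (-1 : ℤ) ^ i := by
        rw [← pow_add, show k - m + i = (k - (m + i)) + 2 * i by omega, pow_add, pow_mul,
          neg_one_sq, one_pow, mul_one]
      have hcmz : (k.choose (m + i) : ℤ) * ((m + i).choose m : ℤ)
          = (k.choose m : ℤ) * ((k - m).choose i : ℤ) := by exact_mod_cast congrArg Nat.cast hcm
      rw [h3, mul_assoc, hcmz]
      ring
    rw [Finset.sum_congr rfl hterm, ← Finset.mul_sum, ← Finset.mul_sum,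
      Int.alternating_sum_range_choose]
    by_cases ht : k - m = 0
    · have hmk' : m = k := by omega
      rw [if_pos hmk', ht, if_pos rfl]
      subst hmk'
      simp
    · rw [if_neg ht, if_neg (by omega), mul_zero, mul_zero]
theorem key_scalar {B : Type*} [CommRing B] [BinomialRing B] (r : B) (n : ℕ) :
    r ^ n = ∑ k ∈ Finset.range (n + 1), Ring.choose r k *
      ∑ j ∈ Finset.range (k + 1),
        (((-1 : ℤ) ^ (k - j) * (k.choose j : ℤ) : ℤ) : B) * ((j : B)) ^ n := by
  have hinner : ∀ k ∈ Finset.range (n + 1),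
      (∑ j ∈ Finset.range (k + 1),
        (((-1 : ℤ) ^ (k - j) * (k.choose j : ℤ) : ℤ) : B) * ((j : B)) ^ n)
      = stirl n k • ((k.factorial : B)) := by
    intro k hk
    have hpow : ∀ j : ℕ, ((j : B)) ^ n
        = ∑ m ∈ Finset.range (n + 1), stirl n m • ((j.descFactorial m : ℕ) : B) := by
      intro j
      rw [pow_eq_sum_stirl]
      refine Finset.sum_congr rfl fun m _ => ?_
      rw [Polynomial.descPochhammer_smeval_eq_descFactorial]
    calc ∑ j ∈ Finset.range (k + 1),
          (((-1 : ℤ) ^ (k - j) * (k.choose j : ℤ) : ℤ) : B) * ((j : B)) ^ n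
        = ∑ m ∈ Finset.range (n + 1), ∑ j ∈ Finset.range (k + 1),
            (((-1 : ℤ) ^ (k - j) * (k.choose j : ℤ) : ℤ) : B)
              * (stirl n m • ((j.descFactorial m : ℕ) : B)) := by
          rw [Finset.sum_comm]
          refine Finset.sum_congr rfl fun j _ => ?_
          rw [hpow j, Finset.mul_sum]
      _ = ∑ m ∈ Finset.range (n + 1), stirl n m •
            ((m.factorial : B) * (((∑ j ∈ Finset.range (k + 1),
              (-1 : ℤ) ^ (k - j) * (k.choose j : ℤ) * (j.choose m : ℤ)) : ℤ) : B)) := by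
          refine Finset.sum_congr rfl fun m _ => ?_
          rw [Int.cast_sum, Finset.mul_sum, Finset.smul_sum]
          refine Finset.sum_congr rfl fun j _ => ?_
          rw [Nat.descFactorial_eq_factorial_mul_choose, mul_smul_comm]
          congr 1
          push_cast
          ring
      _ = ∑ m ∈ Finset.range (n + 1),
            (if m = k then stirl n m • ((m.factorial : B)) else 0) := by
          refine Finset.sum_congr rfl fun m _ => ?_
          rw [choose_orthogonality k m]
          split_ifs with h
          · rw [Int.cast_one, mul_one]
          · rw [Int.cast_zero, mul_zero, smul_zero]
      _ = stirl n k • ((k.factorial : B)) := by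
          rw [Finset.sum_ite_eq' (Finset.range (n + 1)) k
            (fun m => stirl n m • ((m.factorial : B))), if_pos hk]
  rw [pow_eq_sum_stirl]
  refine Finset.sum_congr rfl fun k hk => ?_
  rw [hinner k hk, mul_smul_comm, mul_comm, ← nsmul_eq_mul,
    ← Ring.descPochhammer_eq_factorial_smul_choose]

open DividedPowerAlgebra' in
/-- The divided power map `γ_n : x ↦ x^{[n]}` is numerical of degree `n`:
its `n`-th deviation vanishes, and it satisfies the binomial expansion law. -/
theorem dp_isNumerical (B : Type u) [CommRing B] [BinomialRing B]
    (M : Type u) [AddCommGroup M] [Module B M] (n : ℕ) :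
    (∀ x : Fin (n + 1) → M,
        (∑ I : Finset (Fin (n + 1)), (-1 : ℤ) ^ (n + 1 - I.card) • dp B M n (∑ i ∈ I, x i)) = 0) ∧
      (∀ (r : B) (x : M),
        dp B M n (r • x) =
          ∑ k ∈ Finset.range (n + 1),
            Ring.choose r k •
              ∑ j ∈ Finset.range (k + 1),
                ((-1 : ℤ) ^ (k - j) * (k.choose j : ℤ)) • dp B M n ((j : B) • x)) := by
  constructor
  · exact fun x => DividedPowerAlgebra'.deviation_zero x
  · intro r x
    simp only [DividedPowerAlgebra'.dp_smul]
    rw [key_scalar r n, Finset.sum_smul]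
    refine Finset.sum_congr rfl fun k _ => ?_
    rw [mul_smul]
    congr 1
    rw [Finset.sum_smul]
    refine Finset.sum_congr rfl fun j _ => ?_
    rw [mul_smul, Int.cast_smul_eq_zsmul]
end

section
/- Let B be a binomial ring, A an associative unital B-algebra, and n ≥ 1. In the free B-module B[A] on basis symbols [a], a ∈ A, equipped with the product multiplication [a] ⋆ [b] := [ab] (the monoid algebra of the multiplicative monoid of A), one has [Δ_n α] ⋆ [Δ_n β] ≡ n! · [Δ_n (αβ)] modulo I_n, for all α, β ∈ A; here [Δ_n α] := ∑_{j=0}^{n} (−1)^{n−j} binom(n,j) [j·α]. -/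
set_option linter.unusedSectionVars false

open Finset

universe u

variable (B : Type u) [CommRing B] [BinomialRing B]
variable (M : Type u) [AddCommGroup M] [Module B M]

/-- The basis symbol `[x]` in the monoid algebra `B[M]` of the additive monoid `M`. -/
noncomputable def brk (x : M) : AddMonoidAlgebra B M := AddMonoidAlgebra.single x 1

/-- The ideal `I_n ⊆ B[M]` (for the sum multiplication `[x][y] = [x+y]`), generated by the
`(n+1)`-fold deviations `[x_1 ⊥ ⋯ ⊥ x_{n+1}] = ∏ ([x_i] − [0])` and the elements
`[r·x] − ∑_{k=0}^n binom(r,k) ([x] − [0])^k`. -/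
noncomputable def augIdeal (n : ℕ) : Ideal (AddMonoidAlgebra B M) :=
  Ideal.span
    ({ω | ∃ x : Fin (n + 1) → M, ω = ∏ i, (brk B M (x i) - brk B M 0)} ∪
      {ω | ∃ (r : B) (x : M), ω =
        brk B M (r • x) -
          ∑ k ∈ Finset.range (n + 1), Ring.choose r k • (brk B M x - brk B M 0) ^ k})

/-- The `n`-th augmentation algebra `B[M]_n = B[M]/I_n`, as a `B`-module. -/
noncomputable def augAlgebra (n : ℕ) : Type u :=
  AddMonoidAlgebra B M ⧸ (augIdeal B M n).restrictScalars B

noncomputable instance (n : ℕ) : AddCommGroup (augAlgebra B M n) :=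
  inferInstanceAs (AddCommGroup (AddMonoidAlgebra B M ⧸ (augIdeal B M n).restrictScalars B))

noncomputable instance (n : ℕ) : Module B (augAlgebra B M n) :=
  inferInstanceAs (Module B (AddMonoidAlgebra B M ⧸ (augIdeal B M n).restrictScalars B))

/-- The quotient map `B[M] → B[M]_n`. -/
noncomputable def augMk (n : ℕ) : AddMonoidAlgebra B M →ₗ[B] augAlgebra B M n :=
  ((augIdeal B M n).restrictScalars B).mkQ

variable (A : Type u) [Ring A] [Algebra B A]

/-- The product multiplication `[a] ⋆ [b] = [ab]` on `B[A]`, for a `B`-algebra `A`. -/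
noncomputable def starMul (ω ν : AddMonoidAlgebra B A) : AddMonoidAlgebra B A :=
  AddMonoidAlgebra.ofCoeff
    (Finsupp.sum ω.coeff fun x a => Finsupp.sum ν.coeff fun y b => Finsupp.single (x * y) (a * b))

/-! ### Auxiliary integer identities -/

private def Dsum (n m : ℕ) : ℤ :=
  ∑ j ∈ Finset.range (n + 1), ((-1 : ℤ) ^ (n - j) * (n.choose j : ℤ)) * (j : ℤ) ^ m

private lemma Dsum_zero (n : ℕ) (hn : n ≠ 0) : Dsum n 0 = 0 := by
  have h := Int.alternating_sum_range_choose (n := n)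
  rw [if_neg hn] at h
  have hD : Dsum n 0 = (-1 : ℤ) ^ n * ∑ m ∈ range (n + 1), (-1) ^ m * (n.choose m : ℤ) := by
    rw [Finset.mul_sum, Dsum]
    refine Finset.sum_congr rfl fun j hj => ?_
    have hj' : j ≤ n := Nat.lt_succ_iff.mp (Finset.mem_range.mp hj)
    have hsign : (-1 : ℤ) ^ (n - j) = (-1) ^ n * (-1) ^ j := by
      rw [← pow_add]
      have : n + j = (n - j) + 2 * j := by omega
      rw [this, pow_add, pow_mul]
      norm_num
    rw [hsign]; ring
  rw [hD, h, mul_zero]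

private lemma Dsum_rec (n m : ℕ) :
    Dsum (n + 1) (m + 1) = (n + 1) * ∑ t ∈ range (m + 1), (m.choose t : ℤ) * Dsum n t := by
  have expand : ∀ i : ℕ, ((i : ℤ) + 1) ^ m = ∑ t ∈ range (m + 1), (i : ℤ) ^ t * (m.choose t : ℤ) :=
    fun i => by simpa using add_pow (i : ℤ) 1 m
  calc Dsum (n + 1) (m + 1)
      = ∑ i ∈ range (n+1),
          ((-1 : ℤ) ^ (n+1-(i+1)) * (((n+1).choose (i+1) : ℕ) : ℤ)) * ((i+1 : ℕ) : ℤ) ^ (m+1) := by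
        rw [Dsum, Finset.sum_range_succ']
        simp [zero_pow (Nat.succ_ne_zero m)]
    _ = ∑ i ∈ range (n+1),
          ((n : ℤ) + 1) * (((-1 : ℤ) ^ (n - i) * (n.choose i : ℤ)) * ((i : ℤ) + 1) ^ m) := by
        refine Finset.sum_congr rfl fun i hi => ?_
        have h1 : n + 1 - (i + 1) = n - i := by omega
        have h2 : (((n+1).choose (i+1) : ℕ) : ℤ) * ((i : ℤ) + 1)
            = ((n : ℤ) + 1) * (n.choose i : ℤ) := by
          have h := Nat.add_one_mul_choose_eq n i
          have h' : ((n+1) * n.choose i : ℕ) = ((n+1).choose (i+1) * (i+1) : ℕ) := h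
          push_cast at h' ⊢
          linarith [h']
        rw [h1]
        push_cast
        calc (-1 : ℤ) ^ (n - i) * ((n+1).choose (i+1) : ℤ) * ((i : ℤ) + 1) ^ (m + 1)
            = (-1 : ℤ) ^ (n - i) * ((((n+1).choose (i+1) : ℕ) : ℤ) * ((i:ℤ)+1))
                * ((i : ℤ) + 1) ^ m := by
              rw [pow_succ]; ring
          _ = ((n : ℤ) + 1) * (((-1 : ℤ) ^ (n - i) * (n.choose i : ℤ)) * ((i : ℤ) + 1) ^ m) := by
              rw [h2]; ring
    _ = ((n : ℤ) + 1) * ∑ i ∈ range (n+1),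
          ((-1 : ℤ) ^ (n - i) * (n.choose i : ℤ)) * ((i : ℤ) + 1) ^ m := by
        rw [Finset.mul_sum]
    _ = ((n : ℤ) + 1) * ∑ t ∈ range (m + 1), (m.choose t : ℤ) * Dsum n t := by
        congr 1
        calc ∑ i ∈ range (n+1), ((-1 : ℤ) ^ (n - i) * (n.choose i : ℤ)) * ((i : ℤ) + 1) ^ m
            = ∑ i ∈ range (n+1), ∑ t ∈ range (m+1),
                (m.choose t : ℤ) * (((-1 : ℤ) ^ (n - i) * (n.choose i : ℤ)) * (i : ℤ) ^ t) := by
              refine Finset.sum_congr rfl fun i _ => ?_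
              rw [expand i, Finset.mul_sum]
              exact Finset.sum_congr rfl fun t _ => by ring
          _ = ∑ t ∈ range (m+1), (m.choose t : ℤ) * Dsum n t := by
              rw [Finset.sum_comm]
              exact Finset.sum_congr rfl fun t _ => by rw [Dsum, Finset.mul_sum]
    _ = (↑(n+1) : ℤ) * ∑ t ∈ range (m + 1), (m.choose t : ℤ) * Dsum n t := by push_cast; ring

private lemma Dsum_main (n : ℕ) :
    (∀ m < n, Dsum n m = 0) ∧ Dsum n n = n.factorial := by
  induction n with
  | zero =>
    refine ⟨fun m hm => absurd hm (Nat.not_lt_zero m), ?_⟩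
    simp [Dsum]
  | succ n ih =>
    obtain ⟨ih0, ih1⟩ := ih
    constructor
    · intro m hm
      match m with
      | 0 => exact Dsum_zero (n+1) (Nat.succ_ne_zero n)
      | m + 1 =>
        rw [Dsum_rec]
        have : ∑ t ∈ range (m + 1), (m.choose t : ℤ) * Dsum n t = 0 := by
          refine Finset.sum_eq_zero fun t ht => ?_
          rw [ih0 t (by have := Finset.mem_range.mp ht; omega), mul_zero]
        rw [this, mul_zero]
    · rw [Dsum_rec, Finset.sum_range_succ, Nat.choose_self]
      have hz : ∑ t ∈ range n, (n.choose t : ℤ) * Dsum n t = 0 :=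
        Finset.sum_eq_zero fun t ht => by rw [ih0 t (Finset.mem_range.mp ht), mul_zero]
      rw [hz, ih1, Nat.factorial_succ]
      push_cast
      ring

private lemma Ssum_main (n k : ℕ) (hk : k ≤ n) :
    ∑ j ∈ range (n + 1), ∑ l ∈ range (n + 1),
      (((-1 : ℤ) ^ (n - j) * (n.choose j : ℤ)) * ((-1 : ℤ) ^ (n - l) * (n.choose l : ℤ)))
        * ((j * l).choose k : ℤ)
      = if k = n then (n.factorial : ℤ) else 0 := by
  set c : ℕ → ℤ := fun j => (-1 : ℤ) ^ (n - j) * (n.choose j : ℤ) with hc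
  set a : ℕ → ℤ := fun m => (descPochhammer ℤ k).coeff m with ha
  have hdeg : (descPochhammer ℤ k).natDegree = k := descPochhammer_natDegree ℤ k
  have hfac : ∀ N : ℕ, (k.factorial : ℤ) * (N.choose k : ℤ)
      = ∑ m ∈ range (k + 1), a m * (N : ℤ) ^ m := by
    intro N
    have h1 : ((N.descFactorial k : ℕ) : ℤ) = Polynomial.eval (N : ℤ) (descPochhammer ℤ k) :=
      (descPochhammer_eval_eq_descFactorial ℤ N k).symm
    have h2 : (N.descFactorial k : ℕ) = k.factorial * N.choose k :=
      Nat.descFactorial_eq_factorial_mul_choose N k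
    rw [← Nat.cast_mul, ← h2, h1, Polynomial.eval_eq_sum_range, hdeg]
  have key : (k.factorial : ℤ) * (∑ j ∈ range (n + 1), ∑ l ∈ range (n + 1),
      (c j * c l) * ((j * l).choose k : ℤ))
      = ∑ m ∈ range (k + 1), a m * (Dsum n m * Dsum n m) := by
    rw [Finset.mul_sum]
    calc ∑ j ∈ range (n+1),
        (k.factorial : ℤ) * ∑ l ∈ range (n+1), (c j * c l) * ((j*l).choose k : ℤ)
        = ∑ j ∈ range (n+1), ∑ l ∈ range (n+1), ∑ m ∈ range (k+1),
            a m * ((c j * (j:ℤ)^m) * (c l * (l:ℤ)^m)) := by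
          refine Finset.sum_congr rfl fun j _ => ?_
          rw [Finset.mul_sum]
          refine Finset.sum_congr rfl fun l _ => ?_
          calc (k.factorial : ℤ) * ((c j * c l) * ((j*l).choose k : ℤ))
              = (c j * c l) * ((k.factorial : ℤ) * (((j*l : ℕ)).choose k : ℤ)) := by ring
            _ = (c j * c l) * ∑ m ∈ range (k+1), a m * ((j*l : ℕ) : ℤ) ^ m := by rw [hfac]
            _ = ∑ m ∈ range (k+1), a m * ((c j * (j:ℤ)^m) * (c l * (l:ℤ)^m)) := by
                rw [Finset.mul_sum]
                refine Finset.sum_congr rfl fun m _ => ?_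
                push_cast
                ring
      _ = ∑ m ∈ range (k+1), ∑ j ∈ range (n+1), ∑ l ∈ range (n+1),
            a m * ((c j * (j:ℤ)^m) * (c l * (l:ℤ)^m)) := by
          rw [show (∑ j ∈ range (n+1), ∑ l ∈ range (n+1), ∑ m ∈ range (k+1),
              a m * ((c j * (j:ℤ)^m) * (c l * (l:ℤ)^m)))
              = ∑ j ∈ range (n+1), ∑ m ∈ range (k+1), ∑ l ∈ range (n+1),
              a m * ((c j * (j:ℤ)^m) * (c l * (l:ℤ)^m)) from
            Finset.sum_congr rfl fun j _ => Finset.sum_comm ..]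
          exact Finset.sum_comm ..
      _ = ∑ m ∈ range (k + 1), a m * (Dsum n m * Dsum n m) := by
          refine Finset.sum_congr rfl fun m _ => ?_
          rw [Dsum, Finset.sum_mul_sum, Finset.mul_sum]
          refine Finset.sum_congr rfl fun j _ => ?_
          rw [Finset.mul_sum]
  have hfne : (k.factorial : ℤ) ≠ 0 := Int.natCast_ne_zero.mpr (Nat.factorial_ne_zero k)
  rcases eq_or_lt_of_le hk with rfl | hlt
  · rw [if_pos rfl]
    apply mul_left_cancel₀ hfne
    rw [key, Finset.sum_range_succ]
    have hz : ∑ m ∈ range k, a m * (Dsum k m * Dsum k m) = 0 :=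
      Finset.sum_eq_zero fun m hm => by
        rw [(Dsum_main k).1 m (Finset.mem_range.mp hm), mul_zero, mul_zero]
    have hlead : a k = 1 := by
      have := (monic_descPochhammer ℤ k)
      rw [Polynomial.Monic, Polynomial.leadingCoeff, hdeg] at this
      exact this
    rw [hz, hlead, (Dsum_main k).2, zero_add, one_mul]
  · rw [if_neg (Nat.ne_of_lt hlt)]
    apply mul_left_cancel₀ hfne
    rw [key, mul_zero]
    refine Finset.sum_eq_zero fun m hm => ?_
    have : m < n := by have := Finset.mem_range.mp hm; omega
    rw [(Dsum_main n).1 m this, mul_zero, mul_zero]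

/-! ### Bilinearity of the star multiplication -/

private lemma starMul_zero_left (ν : AddMonoidAlgebra B A) : starMul B A 0 ν = 0 := by
  unfold starMul; rw [AddMonoidAlgebra.coeff_zero, Finsupp.sum_zero_index]; rfl

private lemma starMul_zero_right (ω : AddMonoidAlgebra B A) : starMul B A ω 0 = 0 := by
  unfold starMul
  simp [Finsupp.sum_zero_index]

private lemma starMul_add_left (ω₁ ω₂ ν : AddMonoidAlgebra B A) :
    starMul B A (ω₁ + ω₂) ν = starMul B A ω₁ ν + starMul B A ω₂ ν := by
  classical
  unfold starMul
  rw [AddMonoidAlgebra.coeff_add, Finsupp.sum_add_index, AddMonoidAlgebra.ofCoeff_add]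
  · intro x _; simp
  · intro x _ a₁ a₂
    rw [← Finsupp.sum_add]
    congr 1
    ext y b
    rw [add_mul, Finsupp.single_add]

private lemma starMul_add_right (ω ν₁ ν₂ : AddMonoidAlgebra B A) :
    starMul B A ω (ν₁ + ν₂) = starMul B A ω ν₁ + starMul B A ω ν₂ := by
  classical
  unfold starMul
  rw [AddMonoidAlgebra.coeff_add, ← AddMonoidAlgebra.ofCoeff_add, ← Finsupp.sum_add]
  congr 2
  ext x a
  rw [Finsupp.sum_add_index]
  · intro y _; simp
  · intro y _ b₁ b₂
    rw [mul_add, Finsupp.single_add]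

/-- `starMul` with fixed right argument, as an `AddMonoidHom`. -/
private noncomputable def starHomL (ν : AddMonoidAlgebra B A) :
    AddMonoidAlgebra B A →+ AddMonoidAlgebra B A where
  toFun ω := starMul B A ω ν
  map_zero' := starMul_zero_left B A ν
  map_add' ω₁ ω₂ := starMul_add_left B A ω₁ ω₂ ν

/-- `starMul` with fixed left argument, as an `AddMonoidHom`. -/
private noncomputable def starHomR (ω : AddMonoidAlgebra B A) :
    AddMonoidAlgebra B A →+ AddMonoidAlgebra B A where
  toFun ν := starMul B A ω ν
  map_zero' := starMul_zero_right B A ω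
  map_add' ν₁ ν₂ := starMul_add_right B A ω ν₁ ν₂

private lemma starMul_single_single (x y : A) (a b : B) :
    starMul B A (AddMonoidAlgebra.ofCoeff (Finsupp.single x a))
      (AddMonoidAlgebra.ofCoeff (Finsupp.single y b))
      = AddMonoidAlgebra.ofCoeff (Finsupp.single (x * y) (a * b)) := by
  unfold starMul
  simp only [AddMonoidAlgebra.coeff_ofCoeff]
  rw [Finsupp.sum_single_index, Finsupp.sum_single_index]
  · rw [mul_zero, Finsupp.single_zero]
  · rw [Finsupp.sum_single_index] <;> simp

private lemma starMul_brk (x y : A) :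
    starMul B A (brk B A x) (brk B A y) = brk B A (x * y) := by
  unfold brk
  rw [show (AddMonoidAlgebra.single x (1:B)) = AddMonoidAlgebra.ofCoeff (Finsupp.single x (1:B)) from rfl]
  rw [show (AddMonoidAlgebra.single y (1:B)) = AddMonoidAlgebra.ofCoeff (Finsupp.single y (1:B)) from rfl]
  rw [starMul_single_single, one_mul, AddMonoidAlgebra.ofCoeff_single]

private lemma starMul_sum_sum (s t : Finset ℕ) (c d : ℕ → ℤ) (f g : ℕ → AddMonoidAlgebra B A) :
    starMul B A (∑ j ∈ s, c j • f j) (∑ l ∈ t, d l • g l)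
    = ∑ j ∈ s, ∑ l ∈ t, (c j * d l) • starMul B A (f j) (g l) := by
  have h1 : starMul B A (∑ j ∈ s, c j • f j) (∑ l ∈ t, d l • g l)
      = ∑ j ∈ s, c j • starMul B A (f j) (∑ l ∈ t, d l • g l) := by
    rw [show starMul B A (∑ j ∈ s, c j • f j) (∑ l ∈ t, d l • g l)
        = starHomL B A (∑ l ∈ t, d l • g l) (∑ j ∈ s, c j • f j) from rfl,
      map_sum]
    exact Finset.sum_congr rfl fun j _ => by rw [AddMonoidHom.map_zsmul]; rfl
  rw [h1]
  refine Finset.sum_congr rfl fun j _ => ?_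
  rw [show starMul B A (f j) (∑ l ∈ t, d l • g l)
      = starHomR B A (f j) (∑ l ∈ t, d l • g l) from rfl, map_sum, Finset.smul_sum]
  refine Finset.sum_congr rfl fun l _ => ?_
  rw [AddMonoidHom.map_zsmul, smul_smul]
  rfl

/-! ### Expansion of `(brk x - 1)^N` -/

private lemma brk_zero_eq_one : brk B A 0 = (1 : AddMonoidAlgebra B A) :=
  AddMonoidAlgebra.one_def.symm

private lemma brk_pow (y : A) (j : ℕ) : (brk B A y) ^ j = brk B A (j • y) := by
  rw [brk, AddMonoidAlgebra.single_pow, one_pow, brk]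

private lemma delta_pow (y : A) (N : ℕ) :
    ∑ j ∈ range (N + 1), ((-1 : ℤ) ^ (N - j) * (N.choose j : ℤ)) • brk B A (j • y)
      = (brk B A y - 1) ^ N := by
  rw [sub_pow]
  refine Finset.sum_congr rfl fun j hj => ?_
  have hj' : j ≤ N := by have := Finset.mem_range.mp hj; omega
  have hsign : ((-1 : AddMonoidAlgebra B A)) ^ (j + N) = (-1) ^ (N - j) := by
    rw [show j + N = (N - j) + 2 * j from by omega, pow_add, pow_mul]
    norm_num
  rw [one_pow, ← brk_pow, zsmul_eq_mul, hsign]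
  push_cast
  ring

/-- The deviation formula: `[Δ_n α] ⋆ [Δ_n β] ≡ n! · [Δ_n (αβ)]` modulo `I_n`,
where `[Δ_n α] = ∑_{j=0}^n (−1)^{n−j} C(n,j) [j·α]`. -/
theorem starMul_delta_congr (B : Type u) [CommRing B] [BinomialRing B]
    (A : Type u) [Ring A] [Algebra B A] (n : ℕ) (hn : 1 ≤ n) (α β : A) :
    starMul B A
        (∑ j ∈ Finset.range (n + 1), ((-1 : ℤ) ^ (n - j) * (n.choose j : ℤ)) • brk B A (j • α))
        (∑ j ∈ Finset.range (n + 1), ((-1 : ℤ) ^ (n - j) * (n.choose j : ℤ)) • brk B A (j • β))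
        - n.factorial •
          (∑ j ∈ Finset.range (n + 1),
            ((-1 : ℤ) ^ (n - j) * (n.choose j : ℤ)) • brk B A (j • (α * β)))
      ∈ augIdeal B A n := by
  set c : ℕ → ℤ := fun j => (-1 : ℤ) ^ (n - j) * (n.choose j : ℤ) with hc
  set δ : AddMonoidAlgebra B A := brk B A (α * β) - 1 with hδ
  -- Step 1: expand the star product
  have hstar : starMul B A
      (∑ j ∈ range (n + 1), c j • brk B A (j • α))
      (∑ j ∈ range (n + 1), c j • brk B A (j • β))
      = ∑ j ∈ range (n + 1), ∑ l ∈ range (n + 1), (c j * c l) • brk B A ((j * l) • (α * β)) := by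
    rw [starMul_sum_sum]
    refine Finset.sum_congr rfl fun j _ => Finset.sum_congr rfl fun l _ => ?_
    rw [starMul_brk, smul_mul_smul_comm]
  -- Step 2: generator membership
  have mem2 : ∀ m : ℕ,
      brk B A (m • (α * β)) - ∑ k ∈ range (n + 1), ((m.choose k : ℤ)) • δ ^ k
        ∈ augIdeal B A n := by
    intro m
    have hgen : brk B A (((m : ℕ) : B) • (α * β)) -
        ∑ k ∈ range (n + 1),
          Ring.choose ((m : ℕ) : B) k • (brk B A (α * β) - brk B A 0) ^ k
        ∈ augIdeal B A n :=
      Ideal.subset_span (Or.inr ⟨((m : ℕ) : B), α * β, rfl⟩)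
    have e1 : ((m : ℕ) : B) • (α * β) = m • (α * β) := Nat.cast_smul_eq_nsmul B m (α * β)
    have e2 : ∀ k, Ring.choose ((m : ℕ) : B) k • (brk B A (α * β) - brk B A 0) ^ k
        = ((m.choose k : ℤ)) • δ ^ k := by
      intro k
      rw [brk_zero_eq_one, ← hδ, Ring.choose_natCast, Nat.cast_smul_eq_nsmul B, natCast_zsmul]
    simp only [e1, e2] at hgen
    exact hgen
  -- Step 3: the combinatorial collapse
  have hkey : ∑ j ∈ range (n + 1), ∑ l ∈ range (n + 1),
      (c j * c l) • (∑ k ∈ range (n + 1), (((j * l).choose k : ℤ)) • δ ^ k)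
      = (n.factorial : ℤ) • δ ^ n := by
    calc ∑ j ∈ range (n + 1), ∑ l ∈ range (n + 1),
        (c j * c l) • (∑ k ∈ range (n + 1), (((j * l).choose k : ℤ)) • δ ^ k)
        = ∑ j ∈ range (n + 1), ∑ l ∈ range (n + 1), ∑ k ∈ range (n + 1),
            ((c j * c l) * ((j * l).choose k : ℤ)) • δ ^ k := by
          refine Finset.sum_congr rfl fun j _ => Finset.sum_congr rfl fun l _ => ?_
          rw [Finset.smul_sum]
          exact Finset.sum_congr rfl fun k _ => smul_smul (c j * c l) _ _
      _ = ∑ j ∈ range (n + 1), ∑ k ∈ range (n + 1), ∑ l ∈ range (n + 1),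
            ((c j * c l) * ((j * l).choose k : ℤ)) • δ ^ k :=
          Finset.sum_congr rfl fun j _ => Finset.sum_comm ..
      _ = ∑ k ∈ range (n + 1), ∑ j ∈ range (n + 1), ∑ l ∈ range (n + 1),
            ((c j * c l) * ((j * l).choose k : ℤ)) • δ ^ k := Finset.sum_comm ..
      _ = ∑ k ∈ range (n + 1),
            (∑ j ∈ range (n + 1), ∑ l ∈ range (n + 1),
              (c j * c l) * ((j * l).choose k : ℤ)) • δ ^ k := by
          refine Finset.sum_congr rfl fun k _ => ?_
          rw [Finset.sum_smul]
          exact Finset.sum_congr rfl fun j _ => (Finset.sum_smul).symm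
      _ = ∑ k ∈ range (n + 1), (if k = n then (n.factorial : ℤ) else 0) • δ ^ k := by
          refine Finset.sum_congr rfl fun k hk => ?_
          rw [Ssum_main n k (by have := Finset.mem_range.mp hk; omega)]
      _ = (n.factorial : ℤ) • δ ^ n := by
          rw [Finset.sum_eq_single n]
          · rw [if_pos rfl]
          · intro b _ hbn; rw [if_neg hbn, zero_smul]
          · intro h; exact absurd (Finset.self_mem_range_succ n) h
  -- Step 4: assemble
  have hT : ∑ j ∈ range (n + 1), ∑ l ∈ range (n + 1),
      (c j * c l) • (brk B A ((j * l) • (α * β))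
        - ∑ k ∈ range (n + 1), (((j * l).choose k : ℤ)) • δ ^ k) ∈ augIdeal B A n := by
    refine Submodule.sum_mem _ fun j _ => Submodule.sum_mem _ fun l _ => ?_
    rw [zsmul_eq_mul]
    exact Ideal.mul_mem_left _ _ (mem2 (j * l))
  have hfinal : starMul B A
      (∑ j ∈ range (n + 1), c j • brk B A (j • α))
      (∑ j ∈ range (n + 1), c j • brk B A (j • β))
      - n.factorial • (∑ j ∈ range (n + 1), c j • brk B A (j • (α * β)))
      = ∑ j ∈ range (n + 1), ∑ l ∈ range (n + 1),
        (c j * c l) • (brk B A ((j * l) • (α * β))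
          - ∑ k ∈ range (n + 1), (((j * l).choose k : ℤ)) • δ ^ k) := by
    rw [hstar, delta_pow, ← hδ, ← natCast_zsmul (δ ^ n) n.factorial, ← hkey]
    simp only [smul_sub, Finset.sum_sub_distrib]
  rw [hfinal]
  exact hT
end

section
/- Let B be a binomial ring, F a polynomial functor of degree n from finitely generated free B-modules to B-modules, and r ∈ B. If F(r·σ) = r^n · F(σ) for every endomorphism σ : B^n → B^n, then F(r·α) = r^n · F(α) for every homomorphism α : M → N of finitely generated free B-modules. -/
open Finset

universe u

variable (B : Type u) [CommRing B] [BinomialRing B]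

set_option linter.unusedSectionVars false in
lemma aux_factor (n : ℕ) (F : ModFunctor B) (r : B)
    (h : ∀ σ : FGFree.std B n →ₗ[B] FGFree.std B n, F.map (r • σ) = r ^ n • F.map σ)
    {M N : FGFree B} (f : M →ₗ[B] FGFree.std B n) (g : FGFree.std B n →ₗ[B] N) :
    F.map (r • (g ∘ₗ f)) = r ^ n • F.map (g ∘ₗ f) := by
  have e : r • (g ∘ₗ f)
      = g ∘ₗ ((r • (LinearMap.id : FGFree.std B n →ₗ[B] FGFree.std B n)) ∘ₗ f) := by
    ext x; simp
  rw [e, F.map_comp, F.map_comp, h, F.map_id, F.map_comp]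
  ext y; simp


/-- If a polynomial functor of degree `n` satisfies `F(r·σ) = r^n·F(σ)` on endomorphisms of
`B^n`, then it does so on all homomorphisms of f.g. free modules. -/
theorem quasiHomogeneous_of_std (B : Type u) [CommRing B] [BinomialRing B]
    (n : ℕ) (F : ModFunctor B) (hF : F.IsPolynomial B n) (r : B)
    (h : ∀ σ : FGFree.std B n →ₗ[B] FGFree.std B n, F.map (r • σ) = r ^ n • F.map σ) :
    ∀ (M N : FGFree B) (α : M →ₗ[B] N), F.map (r • α) = r ^ n • F.map α := by
  classical
  intro M N α
  set ι := Module.Free.ChooseBasisIndex B M with hι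
  let b : Module.Basis ι B M := Module.Free.chooseBasis B M
  let γ : ι → (M →ₗ[B] N) := fun i => α ∘ₗ (b.coord i).smulRight (b i)
  -- sums of ≤ n of the γ's factor through B^n
  have hfac : ∀ s : Finset ι, s.card ≤ n →
      F.map (r • ∑ i ∈ s, γ i) = r ^ n • F.map (∑ i ∈ s, γ i) := by
    intro s hs
    obtain ⟨f, g, hfg⟩ : ∃ (f : M →ₗ[B] FGFree.std B n) (g : FGFree.std B n →ₗ[B] N),
        (∑ i ∈ s, γ i) = g ∘ₗ f := by
      rcases s.eq_empty_or_nonempty with rfl | hne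
      · exact ⟨0, 0, by simp⟩
      · haveI : Nonempty {x // x ∈ s} := hne.to_subtype
        have hcard : Fintype.card {x // x ∈ s} ≤ Fintype.card (Fin n) := by
          simpa [Fintype.card_coe] using hs
        obtain ⟨u⟩ := Function.Embedding.nonempty_of_card_le hcard
        obtain ⟨ρ, hρ⟩ := u.injective.hasLeftInverse
        refine ⟨(LinearMap.funLeft B B ρ) ∘ₗ (LinearMap.pi fun i : s => b.coord i),
          α ∘ₗ (Fintype.linearCombination B fun i : s => b (i : ι)) ∘ₗ
            (LinearMap.funLeft B B u), ?_⟩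
        ext x
        have hρ' : ∀ i, ρ (u i) = i := hρ
        simp only [γ, LinearMap.comp_apply, LinearMap.sum_apply, LinearMap.smulRight_apply,
          Module.Basis.coord_apply, LinearMap.funLeft_apply, LinearMap.pi_apply,
          Fintype.linearCombination_apply, hρ']
        rw [← map_sum, ← Finset.sum_coe_sort s fun i => b.repr x i • b i]
        congr 1
        refine Finset.sum_congr rfl fun i _ => ?_
        have e2 : (b.repr x) (i : ι) = (b.repr x) ((ρ (u i) : {x // x ∈ s}) : ι) := by
          rw [hρ' i]
        exact congrArg (· • b (i : ι)) e2
    rw [hfg]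
    exact aux_factor B n F r h _ _
  -- deviations of the "defect" vanish
  have hdev : ∀ β : Fin (n + 1) → (M →ₗ[B] N),
      ∑ J : Finset (Fin (n + 1)), (-1 : ℤ) ^ (n + 1 - J.card) •
        (F.map (r • ∑ j ∈ J, β j) - r ^ n • F.map (∑ j ∈ J, β j)) = 0 := by
    intro β
    have h1 := hF M N (fun j => r • β j)
    have h2 := hF M N β
    simp only [ModFunctor.dev] at h1 h2
    have e1 : ∀ J : Finset (Fin (n + 1)), (∑ j ∈ J, r • β j) = r • ∑ j ∈ J, β j := by
      intro J; rw [Finset.smul_sum]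
    simp only [e1] at h1
    calc ∑ J : Finset (Fin (n + 1)), (-1 : ℤ) ^ (n + 1 - J.card) •
            (F.map (r • ∑ j ∈ J, β j) - r ^ n • F.map (∑ j ∈ J, β j))
        = (∑ J : Finset (Fin (n + 1)), (-1 : ℤ) ^ (n + 1 - J.card) •
            F.map (r • ∑ j ∈ J, β j))
          - r ^ n • ∑ J : Finset (Fin (n + 1)), (-1 : ℤ) ^ (n + 1 - J.card) •
            F.map (∑ j ∈ J, β j) := by
          rw [Finset.smul_sum, ← Finset.sum_sub_distrib]
          refine Finset.sum_congr rfl fun J _ => ?_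
          rw [smul_sub, smul_comm]
      _ = 0 := by rw [h1, h2, smul_zero, sub_zero]
  -- main claim by strong induction on the support size
  have main : ∀ m : ℕ, ∀ s : Finset ι, s.card = m →
      F.map (r • ∑ i ∈ s, γ i) = r ^ n • F.map (∑ i ∈ s, γ i) := by
    intro m
    induction m using Nat.strong_induction_on with
    | _ m IH =>
      intro s hs
      by_cases hm : s.card ≤ n
      · exact hfac s hm
      · have hnm : n < m := by omega
        obtain ⟨t, hts, ht⟩ := Finset.exists_subset_card_eq (show n ≤ s.card by omega)
        have hsne : s.Nonempty := Finset.card_pos.mp (by omega)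
        obtain ⟨i0, hi0⟩ := hsne
        set w : Fin n → ι := fun j => (((t.equivFinOfCardEq ht).symm) j : ι) with hw
        have hwinj : Function.Injective w := fun a a' e =>
          (t.equivFinOfCardEq ht).symm.injective (Subtype.ext e)
        have hwt : Finset.image w Finset.univ = t := by
          apply Finset.eq_of_subset_of_card_le
          · intro i hi
            obtain ⟨j, _, rfl⟩ := Finset.mem_image.mp hi
            exact (((t.equivFinOfCardEq ht).symm) j).2
          · rw [Finset.card_image_of_injective _ hwinj, Finset.card_univ, Fintype.card_fin, ht]
        set β : Fin (n + 1) → (M →ₗ[B] N) := fun j =>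
          if hj : (j : ℕ) < n then γ (w ⟨j, hj⟩) else ∑ i ∈ s \ t, γ i with hβ
        set ψ : Fin (n + 1) → ι := fun j =>
          if hj : (j : ℕ) < n then w ⟨j, hj⟩ else i0 with hψ
        have hβψ : ∀ j : Fin (n + 1), (j : ℕ) < n → β j = γ (ψ j) := by
          intro j hj; simp only [hβ, hψ, dif_pos hj]
        have hψt : ∀ j : Fin (n + 1), (j : ℕ) < n → ψ j ∈ t := by
          intro j hj
          simp only [hψ, dif_pos hj]
          rw [← hwt]
          exact Finset.mem_image_of_mem _ (Finset.mem_univ _)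
        have hψinj : ∀ x : Fin (n + 1), (x : ℕ) < n → ∀ y : Fin (n + 1), (y : ℕ) < n →
            ψ x = ψ y → x = y := by
          intro x hx y hy e
          simp only [hψ, dif_pos hx, dif_pos hy] at e
          have e3 := congrArg Fin.val (hwinj e)
          exact Fin.ext e3
        have e2 : β (Fin.last n) = ∑ i ∈ s \ t, γ i := by
          simp only [hβ]
          rw [dif_neg (by simp)]
        have hSuniv : ∑ j : Fin (n + 1), β j = ∑ i ∈ s, γ i := by
          rw [Fin.sum_univ_castSucc, e2]
          have e1 : ∀ j : Fin n, β (Fin.castSucc j) = γ (w j) := by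
            intro j
            have hj : ((Fin.castSucc j : Fin (n + 1)) : ℕ) < n := by simp
            simp only [hβ, dif_pos hj]
            exact congrArg (fun k => γ (w k)) (Fin.ext rfl)
          rw [Finset.sum_congr rfl fun j _ => e1 j]
          have e3 : ∑ j : Fin n, γ (w j) = ∑ i ∈ t, γ i := by
            rw [← hwt, Finset.sum_image fun a _ a' _ e => hwinj e]
          rw [e3, add_comm, Finset.sum_sdiff hts]
        have hJ0 : ∀ J : Finset (Fin (n + 1)), J ≠ Finset.univ →
            F.map (r • ∑ j ∈ J, β j) - r ^ n • F.map (∑ j ∈ J, β j) = 0 := by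
          intro J hJne
          have hJcard : J.card ≤ n := by
            have h1 := Finset.card_lt_card (Finset.ssubset_univ_iff.mpr hJne)
            simp only [Finset.card_univ, Fintype.card_fin] at h1
            omega
          suffices hsuff : ∃ u : Finset ι, u ⊆ s ∧ u.card < m ∧
              (∑ j ∈ J, β j) = ∑ i ∈ u, γ i by
            obtain ⟨u, hus, hum, hsum⟩ := hsuff
            rw [hsum, IH u.card hum u rfl, sub_self]
          by_cases hl : Fin.last n ∈ J
          · have hJe : ∀ j ∈ J.erase (Fin.last n), (j : ℕ) < n := fun j hj =>
              Fin.val_lt_last (Finset.ne_of_mem_erase hj)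
            have himt : (J.erase (Fin.last n)).image ψ ⊆ t := by
              intro i hi
              obtain ⟨j, hj, rfl⟩ := Finset.mem_image.mp hi
              exact hψt j (hJe j hj)
            refine ⟨(s \ t) ∪ (J.erase (Fin.last n)).image ψ, ?_, ?_, ?_⟩
            · exact Finset.union_subset (Finset.sdiff_subset) (himt.trans hts)
            · have hc1 := Finset.card_union_le (s \ t) ((J.erase (Fin.last n)).image ψ)
              have hc2 : (s \ t).card = s.card - n := by rw [Finset.card_sdiff_of_subset hts, ht]
              have hc3 := Finset.card_image_le (f := ψ) (s := J.erase (Fin.last n))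
              have hc4 : (J.erase (Fin.last n)).card = J.card - 1 :=
                Finset.card_erase_of_mem hl
              have hc5 : 1 ≤ J.card := Finset.card_pos.mpr ⟨_, hl⟩
              omega
            · have hdisj : Disjoint (s \ t) ((J.erase (Fin.last n)).image ψ) :=
                Finset.disjoint_of_subset_right himt Finset.sdiff_disjoint
              rw [← Finset.add_sum_erase J β hl, Finset.sum_union hdisj, e2]
              congr 1
              rw [Finset.sum_image fun x hx y hy e => hψinj x (hJe x hx) y (hJe y hy) e]
              exact Finset.sum_congr rfl fun j hj => hβψ j (hJe j hj)
          · have hJlt : ∀ j ∈ J, (j : ℕ) < n := fun j hj =>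
              Fin.val_lt_last (fun e => hl (e ▸ hj))
            have himt : J.image ψ ⊆ t := by
              intro i hi
              obtain ⟨j, hj, rfl⟩ := Finset.mem_image.mp hi
              exact hψt j (hJlt j hj)
            refine ⟨J.image ψ, himt.trans hts, ?_, ?_⟩
            · have := Finset.card_le_card himt
              omega
            · rw [Finset.sum_image fun x hx y hy e => hψinj x (hJlt x hx) y (hJlt y hy) e]
              exact Finset.sum_congr rfl fun j hj => hβψ j (hJlt j hj)
        have h0 := hdev β
        rw [← Finset.add_sum_erase _ _
          (Finset.mem_univ (Finset.univ : Finset (Fin (n + 1))))] at h0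
        have hrest : ∑ J ∈ (Finset.univ : Finset (Finset (Fin (n + 1)))).erase Finset.univ,
            (-1 : ℤ) ^ (n + 1 - J.card) •
              (F.map (r • ∑ j ∈ J, β j) - r ^ n • F.map (∑ j ∈ J, β j)) = 0 :=
          Finset.sum_eq_zero fun J hJ => by
            rw [hJ0 J (Finset.ne_of_mem_erase hJ), smul_zero]
        rw [hrest, add_zero] at h0
        have hcoef : n + 1 - (Finset.univ : Finset (Fin (n + 1))).card = 0 := by
          simp [Finset.card_univ]
        rw [hcoef, pow_zero, one_smul, sub_eq_zero] at h0
        rw [hSuniv] at h0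
        exact h0
  have hα : (∑ i ∈ (Finset.univ : Finset ι), γ i) = α := by
    ext x
    simp only [LinearMap.sum_apply, γ, LinearMap.comp_apply, LinearMap.smulRight_apply,
      Module.Basis.coord_apply]
    rw [← map_sum, b.sum_repr]
  have hfin := main (Finset.univ : Finset ι).card Finset.univ rfl
  rwa [hα] at hfin
end

section
/- Let B be a binomial ring, M and N B-modules, and n a natural number. For a B-linear map χ : M → N, let χ_* : B[M] → B[N] denote the induced algebra homomorphism with [x] ↦ [χ(x)]. Then: (i) χ_*(I_n(M)) ⊆ I_n(N); (ii) for all B-linear maps χ_1,…,χ_{n+1} : M → N and every ω ∈ B[M], (∑_{I ⊆ {1,…,n+1}} (−1)^{n+1−|I|} (∑_{i∈I} χ_i)_*)(ω) ∈ I_n(N); and (iii) for every r ∈ B, every χ : M → N and every ω ∈ B[M], ((r·χ)_* − ∑_{k=0}^{n} binom(r,k) · ∑_{j=0}^{k} (−1)^{k−j} binom(k,j) (j·χ)_*)(ω) ∈ I_n(N). In other words, M ↦ B[M]_n is a well-defined functor whose arrow maps are numerical of degree n. -/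
set_option linter.unusedSectionVars false

open Finset

universe u

variable (B : Type u) [CommRing B] [BinomialRing B]
variable (M : Type u) [AddCommGroup M] [Module B M]

variable (N : Type u) [AddCommGroup N] [Module B N]

/-- The map `χ_* : B[M] → B[N]`, `[x] ↦ [χ(x)]`, induced by a linear map `χ : M → N`. -/
noncomputable def pushMap (χ : M →ₗ[B] N) :
    AddMonoidAlgebra B M →ₗ[B] AddMonoidAlgebra B N :=
  AddMonoidAlgebra.mapDomainLinearMap B B χ

section Aux

lemma brk_zero : brk B M 0 = 1 := rfl

lemma brk_add (x y : M) : brk B M (x + y) = brk B M x * brk B M y := by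
  simp [brk, AddMonoidAlgebra.single_mul_single]

lemma brk_pow_s13 (x : M) (k : ℕ) : brk B M x ^ k = brk B M (k • x) := by
  simp [brk, AddMonoidAlgebra.single_pow]

lemma brk_sum {m : ℕ} (s : Finset (Fin m)) (y : Fin m → M) :
    brk B M (∑ i ∈ s, y i) = ∏ i ∈ s, brk B M (y i) := by
  classical
  induction s using Finset.induction with
  | empty => simp [brk_zero]
  | insert _ _ h ih =>
    rw [Finset.sum_insert h, Finset.prod_insert h, brk_add, ih]

/-- `pushMap` as a ring homomorphism. -/
noncomputable def pushRH (χ : M →ₗ[B] N) :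
    AddMonoidAlgebra B M →+* AddMonoidAlgebra B N :=
  AddMonoidAlgebra.mapDomainRingHom B χ

lemma pushMap_eq (χ : M →ₗ[B] N) (ω : AddMonoidAlgebra B M) :
    pushMap B M N χ ω = pushRH B M N χ ω := by
  ext; simp [pushMap, pushRH]

lemma pushMap_single (χ : M →ₗ[B] N) (x : M) (b : B) :
    pushMap B M N χ (AddMonoidAlgebra.single x b) = AddMonoidAlgebra.single (χ x) b :=
  AddMonoidAlgebra.mapDomainLinearMap_single _ _ _

lemma pushMap_brk (χ : M →ₗ[B] N) (x : M) :
    pushMap B M N χ (brk B M x) = brk B N (χ x) :=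
  AddMonoidAlgebra.mapDomainLinearMap_single _ _ _

lemma pushMap_mul (χ : M →ₗ[B] N) (a b : AddMonoidAlgebra B M) :
    pushMap B M N χ (a * b) = pushMap B M N χ a * pushMap B M N χ b := by
  rw [pushMap_eq, pushMap_eq, pushMap_eq, map_mul]

lemma pushMap_pow (χ : M →ₗ[B] N) (a : AddMonoidAlgebra B M) (k : ℕ) :
    pushMap B M N χ (a ^ k) = pushMap B M N χ a ^ k := by
  rw [pushMap_eq, map_pow, pushMap_eq]

lemma single_eq_smul_brk (y : N) (b : B) :
    (AddMonoidAlgebra.single y b : AddMonoidAlgebra B N) = b • brk B N y := by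
  rw [brk, AddMonoidAlgebra.smul_single', mul_one]

lemma dev_mem (n : ℕ) (y : Fin (n + 1) → N) :
    (∏ i, (brk B N (y i) - brk B N 0)) ∈ augIdeal B N n :=
  Ideal.subset_span (Or.inl ⟨y, rfl⟩)

lemma num_mem (n : ℕ) (r : B) (x : N) :
    (brk B N (r • x) -
        ∑ k ∈ Finset.range (n + 1), Ring.choose r k • (brk B N x - brk B N 0) ^ k)
      ∈ augIdeal B N n :=
  Ideal.subset_span (Or.inr ⟨r, x, rfl⟩)

lemma bsmul_mem (n : ℕ) (b : B) {ω : AddMonoidAlgebra B N}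
    (h : ω ∈ augIdeal B N n) : b • ω ∈ augIdeal B N n := by
  rw [Algebra.smul_def]
  exact Ideal.mul_mem_left _ _ h

/-- Expansion of the deviation product over subsets. -/
lemma prod_sub_one (m : ℕ) (y : Fin m → N) :
    ∏ i, (brk B N (y i) - brk B N 0) =
      ∑ I : Finset (Fin m), (-1 : ℤ) ^ (m - I.card) • brk B N (∑ i ∈ I, y i) := by
  have h1 : ∀ i : Fin m, brk B N (y i) - brk B N 0 = brk B N (y i) + (-1) := by
    intro i; rw [brk_zero]; ring
  simp_rw [h1]
  rw [Fintype.prod_add]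
  refine Finset.sum_congr rfl fun I _ => ?_
  rw [brk_sum, Finset.prod_const, Finset.card_compl, Fintype.card_fin, zsmul_eq_mul]
  push_cast
  ring

/-- Binomial expansion of `([y]-[0])^k`. -/
lemma pow_expand (k : ℕ) (y : N) :
    (brk B N y - brk B N 0) ^ k =
      ∑ j ∈ Finset.range (k + 1),
        ((-1 : ℤ) ^ (k - j) * (k.choose j : ℤ)) • brk B N (j • y) := by
  have h1 : brk B N y - brk B N 0 = brk B N y + (-1) := by rw [brk_zero]; ring
  rw [h1, add_pow]
  refine Finset.sum_congr rfl fun j hj => ?_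
  rw [brk_pow_s13, zsmul_eq_mul]
  push_cast
  ring

lemma pushMap_preserves (n : ℕ) (χ : M →ₗ[B] N) :
    ∀ ω ∈ augIdeal B M n, pushMap B M N χ ω ∈ augIdeal B N n := by
  intro ω h
  unfold augIdeal at h
  induction h using Submodule.span_induction with
  | mem ω hω =>
    rcases hω with ⟨x, rfl⟩ | ⟨r, x, rfl⟩
    · have key : pushMap B M N χ (∏ i, (brk B M (x i) - brk B M 0)) =
          ∏ i, (brk B N (χ (x i)) - brk B N 0) := by
        rw [pushMap_eq, map_prod]
        refine Finset.prod_congr rfl fun i _ => ?_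
        rw [map_sub, ← pushMap_eq, ← pushMap_eq, pushMap_brk, pushMap_brk, map_zero]
      rw [key]
      exact dev_mem B N n fun i => χ (x i)
    · have key : pushMap B M N χ
          (brk B M (r • x) -
            ∑ k ∈ Finset.range (n + 1), Ring.choose r k • (brk B M x - brk B M 0) ^ k) =
          brk B N (r • χ x) -
            ∑ k ∈ Finset.range (n + 1), Ring.choose r k • (brk B N (χ x) - brk B N 0) ^ k := by
        rw [map_sub, pushMap_brk, LinearMap.map_smul, map_sum]
        congr 1
        refine Finset.sum_congr rfl fun k _ => ?_
        rw [map_smul (pushMap B M N χ), pushMap_pow, map_sub, pushMap_brk, pushMap_brk,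
          map_zero]
      rw [key]
      exact num_mem B N n r (χ x)
  | zero => rw [map_zero]; exact (augIdeal B N n).zero_mem
  | add a b _ _ ha hb => rw [map_add]; exact Ideal.add_mem _ ha hb
  | smul a ω _ ih =>
    rw [smul_eq_mul, pushMap_mul]
    exact Ideal.mul_mem_left _ _ ih

end Aux

/-- `M ↦ B[M]_n` is a functor whose arrow maps `χ ↦ χ_*` are numerical of degree `n`:
(i) `χ_*` preserves the ideals `I_n`; (ii) the `n`-th deviation of `χ ↦ χ_*` lands in `I_n(N)`;
(iii) the numericality defect of `χ ↦ χ_*` lands in `I_n(N)`. -/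
theorem pushMap_numerical (B : Type u) [CommRing B] [BinomialRing B]
    (M : Type u) [AddCommGroup M] [Module B M]
    (N : Type u) [AddCommGroup N] [Module B N] (n : ℕ) :
    (∀ χ : M →ₗ[B] N, ∀ ω ∈ augIdeal B M n, pushMap B M N χ ω ∈ augIdeal B N n) ∧
      (∀ (χ : Fin (n + 1) → (M →ₗ[B] N)) (ω : AddMonoidAlgebra B M),
        (∑ I : Finset (Fin (n + 1)),
            (-1 : ℤ) ^ (n + 1 - I.card) • pushMap B M N (∑ i ∈ I, χ i)) ω ∈ augIdeal B N n) ∧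
      (∀ (r : B) (χ : M →ₗ[B] N) (ω : AddMonoidAlgebra B M),
        (pushMap B M N (r • χ) -
            ∑ k ∈ Finset.range (n + 1),
              Ring.choose r k •
                ∑ j ∈ Finset.range (k + 1),
                  ((-1 : ℤ) ^ (k - j) * (k.choose j : ℤ)) • pushMap B M N ((j : B) • χ)) ω
          ∈ augIdeal B N n) := by
  refine ⟨pushMap_preserves B M N n, ?_, ?_⟩
  · -- part (ii)
    intro χ ω
    induction ω using AddMonoidAlgebra.induction_linear with
    | zero => rw [map_zero]; exact (augIdeal B N n).zero_mem
    | add f g hf hg => rw [map_add]; exact Ideal.add_mem _ hf hg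
    | single x b =>
      have key : (∑ I : Finset (Fin (n + 1)),
            (-1 : ℤ) ^ (n + 1 - I.card) • pushMap B M N (∑ i ∈ I, χ i))
              (AddMonoidAlgebra.single x b) =
          b • ∑ I : Finset (Fin (n + 1)),
            (-1 : ℤ) ^ (n + 1 - I.card) • brk B N (∑ i ∈ I, χ i x) := by
        rw [LinearMap.sum_apply, Finset.smul_sum]
        refine Finset.sum_congr rfl fun I _ => ?_
        rw [LinearMap.smul_apply, pushMap_single, LinearMap.sum_apply,
          single_eq_smul_brk, smul_comm]
      rw [key, ← prod_sub_one]
      exact bsmul_mem B N n b (dev_mem B N n fun i => χ i x)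
  · -- part (iii)
    intro r χ ω
    induction ω using AddMonoidAlgebra.induction_linear with
    | zero => rw [map_zero]; exact (augIdeal B N n).zero_mem
    | add f g hf hg => rw [map_add]; exact Ideal.add_mem _ hf hg
    | single x b =>
      have key : (pushMap B M N (r • χ) -
            ∑ k ∈ Finset.range (n + 1),
              Ring.choose r k •
                ∑ j ∈ Finset.range (k + 1),
                  ((-1 : ℤ) ^ (k - j) * (k.choose j : ℤ)) • pushMap B M N ((j : B) • χ))
              (AddMonoidAlgebra.single x b) =
          b • (brk B N (r • χ x) -
            ∑ k ∈ Finset.range (n + 1),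
              Ring.choose r k • (brk B N (χ x) - brk B N 0) ^ k) := by
        rw [LinearMap.sub_apply, LinearMap.sum_apply, smul_sub]
        congr 1
        · rw [pushMap_single, LinearMap.smul_apply, single_eq_smul_brk]
        · rw [Finset.smul_sum]
          refine Finset.sum_congr rfl fun k _ => ?_
          rw [LinearMap.smul_apply, LinearMap.sum_apply]
          have inner : (∑ j ∈ Finset.range (k + 1),
              (((-1 : ℤ) ^ (k - j) * (k.choose j : ℤ)) • pushMap B M N ((j : B) • χ))
                (AddMonoidAlgebra.single x b)) =
              b • (brk B N (χ x) - brk B N 0) ^ k := by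
            rw [pow_expand, Finset.smul_sum]
            refine Finset.sum_congr rfl fun j _ => ?_
            rw [LinearMap.smul_apply, pushMap_single, LinearMap.smul_apply,
              Nat.cast_smul_eq_nsmul, single_eq_smul_brk, smul_comm]
          rw [inner, smul_comm]
      rw [key]
      exact bsmul_mem B N n b (num_mem B N n r (χ x))
end

section
/- Let B be a binomial ring and M a finitely generated free B-module. The degree-2 graded component Γ^2(M) of the divided power algebra of M is spanned as a B-module by the divided squares {x^{[2]} : x ∈ M}; consequently, the B-linear map γ̃_2 : B[M] → Γ^2(M) determined by [x] ↦ x^{[2]} is surjective, and hence so is the divided power map γ_2 : B[M]_2 → Γ^2(M). -/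
set_option linter.unusedSectionVars false
open Finset MvPolynomial TensorProduct

universe u

variable (B : Type u) [CommRing B] [BinomialRing B]
variable (M : Type u) [AddCommGroup M] [Module B M]

/-- The relations defining the divided power algebra of a module. -/
inductive DividedPowerAlg.Rel :
    MvPolynomial (ℕ × M) B → MvPolynomial (ℕ × M) B → Prop
  | zero {m : M} : Rel (X (0, m)) 1
  | smul {r : B} {n : ℕ} {m : M} : Rel (X (n, r • m)) (C (r ^ n) * X (n, m))
  | mul {n p : ℕ} {m : M} :
      Rel (X (n, m) * X (p, m)) (C ((n + p).choose n : B) * X (n + p, m))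
  | add {n : ℕ} {m m' : M} :
      Rel (X (n, m + m')) (∑ ij ∈ Finset.HasAntidiagonal.antidiagonal n, X (ij.1, m) * X (ij.2, m'))

/-- The divided power algebra `Γ(M)` of a `B`-module `M`. -/
def DividedPowerAlg : Type u := RingQuot (DividedPowerAlg.Rel B M)

namespace DividedPowerAlg

noncomputable instance : CommRing (DividedPowerAlg B M) :=
  inferInstanceAs (CommRing (RingQuot (Rel B M)))

noncomputable instance : Algebra B (DividedPowerAlg B M) :=
  inferInstanceAs (Algebra B (RingQuot (Rel B M)))

/-- The divided power `x^{[n]} = dp n x` in the divided power algebra. -/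
noncomputable def dp (n : ℕ) (x : M) : DividedPowerAlg B M :=
  RingQuot.mkAlgHom B (Rel B M) (X (n, x))

/-- The degree-`n` graded component `Γ^n(M)` of the divided power algebra. -/
noncomputable def grade (n : ℕ) : Submodule B (DividedPowerAlg B M) :=
  Submodule.span B
    {u | ∃ (k : ℕ) (d : Fin k → ℕ) (x : Fin k → M),
      (∑ i, d i) = n ∧ u = ∏ i, dp B M (d i) (x i)}

theorem dp_mem_grade (n : ℕ) (x : M) : dp B M n x ∈ grade B M n :=
  Submodule.subset_span ⟨1, fun _ => n, fun _ => x, by simp, by simp⟩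

end DividedPowerAlg

/-- The `B`-linear map `γ̃_n : B[M] → Γ^n(M)`, determined by `[x] ↦ x^{[n]}`. -/
noncomputable def gammaTilde (n : ℕ) :
    AddMonoidAlgebra B M →ₗ[B] ↥(DividedPowerAlg.grade B M n) :=
  Finsupp.lift ↥(DividedPowerAlg.grade B M n) B M
    (fun x => ⟨DividedPowerAlg.dp B M n x, DividedPowerAlg.dp_mem_grade B M n x⟩) ∘ₗ
    (AddMonoidAlgebra.coeffLinearEquiv B).toLinearMap

namespace DividedPowerAlg

lemma dp_zero (m : M) : dp B M 0 m = 1 := by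
  rw [dp, RingQuot.mkAlgHom_rel B Rel.zero, map_one]; rfl

lemma dp_add (n : ℕ) (x y : M) :
    dp B M n (x + y) = ∑ ij ∈ Finset.HasAntidiagonal.antidiagonal n, dp B M ij.1 x * dp B M ij.2 y := by
  rw [dp, RingQuot.mkAlgHom_rel B Rel.add, map_sum]
  simp only [map_mul, dp]
  rfl

lemma dp_one_mul_dp_one (x y : M) :
    dp B M 1 x * dp B M 1 y = dp B M 2 (x + y) - dp B M 2 x - dp B M 2 y := by
  have h := dp_add B M 2 x y
  have ha : (Finset.HasAntidiagonal.antidiagonal 2 : Finset (ℕ × ℕ)) = {(0, 2), (1, 1), (2, 0)} := by decide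
  rw [ha, Finset.sum_insert (by decide), Finset.sum_insert (by decide),
    Finset.sum_singleton] at h
  simp only [dp_zero, one_mul, mul_one] at h
  rw [h]; ring

lemma prod_dp_sum_zero (k : ℕ) (d : Fin k → ℕ) (x : Fin k → M) (h : (∑ i, d i) = 0) :
    (∏ i, dp B M (d i) (x i)) = 1 := by
  have hd : ∀ i, d i = 0 := by
    intro i
    exact Finset.sum_eq_zero_iff.mp h i (Finset.mem_univ i)
  calc ∏ i, dp B M (d i) (x i) = ∏ _i : Fin k, (1 : DividedPowerAlg B M) :=
        Finset.prod_congr rfl fun i _ => by rw [hd i, dp_zero]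
    _ = 1 := Finset.prod_const_one

lemma prod_dp_sum_one : ∀ (k : ℕ) (d : Fin k → ℕ) (x : Fin k → M), (∑ i, d i) = 1 →
    ∃ y : M, (∏ i, dp B M (d i) (x i)) = dp B M 1 y := by
  intro k
  induction k with
  | zero => intro d x h; simp at h
  | succ k ih =>
    intro d x h
    rw [Fin.sum_univ_succ] at h
    rw [Fin.prod_univ_succ]
    have hd : d 0 = 0 ∨ d 0 = 1 := by omega
    rcases hd with hd | hd
    · obtain ⟨y, hy⟩ := ih (fun i => d i.succ) (fun i => x i.succ)
        (show (∑ i : Fin k, d i.succ) = 1 by omega)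
      exact ⟨y, by rw [hd, dp_zero, one_mul, hy]⟩
    · have h0 : (∑ i : Fin k, d i.succ) = 0 := by omega
      refine ⟨x 0, ?_⟩
      rw [prod_dp_sum_zero B M k (fun i => d i.succ) (fun i => x i.succ) h0, mul_one, hd]

lemma prod_dp_sum_two : ∀ (k : ℕ) (d : Fin k → ℕ) (x : Fin k → M), (∑ i, d i) = 2 →
    (∏ i, dp B M (d i) (x i)) ∈
      Submodule.span B {u : DividedPowerAlg B M | ∃ z : M, u = dp B M 2 z} := by
  intro k
  induction k with
  | zero => intro d x h; simp at h
  | succ k ih =>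
    intro d x h
    rw [Fin.sum_univ_succ] at h
    rw [Fin.prod_univ_succ]
    have hd : d 0 = 0 ∨ d 0 = 1 ∨ d 0 = 2 := by omega
    rcases hd with hd | hd | hd
    · rw [hd, dp_zero, one_mul]
      exact ih (fun i => d i.succ) (fun i => x i.succ)
        (show (∑ i : Fin k, d i.succ) = 2 by omega)
    · obtain ⟨y, hy⟩ := prod_dp_sum_one B M k (fun i => d i.succ) (fun i => x i.succ)
        (show (∑ i : Fin k, d i.succ) = 1 by omega)
      rw [hd, hy, dp_one_mul_dp_one]
      refine sub_mem (sub_mem ?_ ?_) ?_ <;> exact Submodule.subset_span ⟨_, rfl⟩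
    · rw [prod_dp_sum_zero B M k (fun i => d i.succ) (fun i => x i.succ)
        (show (∑ i : Fin k, d i.succ) = 0 by omega), mul_one, hd]
      exact Submodule.subset_span ⟨_, rfl⟩

lemma grade_two_le :
    grade B M 2 ≤ Submodule.span B {u : DividedPowerAlg B M | ∃ z : M, u = dp B M 2 z} := by
  rw [grade, Submodule.span_le]
  rintro u ⟨k, d, x, hsum, rfl⟩
  exact prod_dp_sum_two B M k d x hsum

end DividedPowerAlg

open DividedPowerAlg in
lemma gammaTilde_single (n : ℕ) (x : M) :
    gammaTilde B M n (AddMonoidAlgebra.single x (1 : B)) =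
      ⟨dp B M n x, dp_mem_grade B M n x⟩ := by
  rw [gammaTilde]
  simp only [LinearMap.comp_apply, LinearEquiv.coe_coe, AddMonoidAlgebra.coeffLinearEquiv_apply,
    AddMonoidAlgebra.coeff_single]
  erw [Finsupp.lift_apply]
  rw [Finsupp.sum_single_index (by simp), one_smul]

open DividedPowerAlg in
/-- `Γ^2(M)` is spanned by the divided squares `x^{[2]}`; hence `γ̃_2 : B[M] → Γ^2(M)` and the
induced divided power map `γ_2 : B[M]_2 → Γ^2(M)` are surjective. -/
theorem grade_two_spanned_by_dp_two (B : Type u) [CommRing B] [BinomialRing B]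
    (M : Type u) [AddCommGroup M] [Module B M] [Module.Free B M] [Module.Finite B M] :
    Submodule.span B {y : ↥(grade B M 2) | ∃ x : M, (y : DividedPowerAlg B M) = dp B M 2 x}
        = ⊤ ∧
      Function.Surjective (gammaTilde B M 2) ∧
      ∀ h2 : (augIdeal B M 2).restrictScalars B ≤ LinearMap.ker (gammaTilde B M 2),
        Function.Surjective
          (Submodule.liftQ ((augIdeal B M 2).restrictScalars B) (gammaTilde B M 2) h2) := by
  have h1 : Submodule.span B
      {y : ↥(grade B M 2) | ∃ x : M, (y : DividedPowerAlg B M) = dp B M 2 x} = ⊤ := by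
    rw [Submodule.eq_top_iff']
    intro y
    have hy : (y : DividedPowerAlg B M) ∈
        Submodule.span B {u : DividedPowerAlg B M | ∃ z : M, u = dp B M 2 z} :=
      grade_two_le B M y.2
    have himg : Submodule.map (grade B M 2).subtype
        (Submodule.span B
          {y : ↥(grade B M 2) | ∃ x : M, (y : DividedPowerAlg B M) = dp B M 2 x}) =
        Submodule.span B {u : DividedPowerAlg B M | ∃ z : M, u = dp B M 2 z} := by
      rw [Submodule.map_span]
      congr 1
      ext u
      constructor
      · rintro ⟨w, ⟨z, hz⟩, rfl⟩
        exact ⟨z, hz⟩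
      · rintro ⟨z, rfl⟩
        exact ⟨⟨dp B M 2 z, dp_mem_grade B M 2 z⟩, ⟨z, rfl⟩, rfl⟩
    rw [← himg] at hy
    obtain ⟨w, hw, hwy⟩ := hy
    have : w = y := Subtype.ext hwy
    rwa [← this]
  refine ⟨h1, ?_, ?_⟩
  · have hsurj : Function.Surjective (gammaTilde B M 2) := by
      rw [← LinearMap.range_eq_top, eq_top_iff, ← h1, Submodule.span_le]
      rintro y ⟨x, hx⟩
      exact ⟨AddMonoidAlgebra.single x (1 : B), by rw [gammaTilde_single]; exact Subtype.ext hx.symm⟩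
    exact hsurj
  · intro h2 z
    have hsurj : Function.Surjective (gammaTilde B M 2) := by
      rw [← LinearMap.range_eq_top, eq_top_iff, ← h1, Submodule.span_le]
      rintro y ⟨x, hx⟩
      exact ⟨AddMonoidAlgebra.single x (1 : B), by rw [gammaTilde_single]; exact Subtype.ext hx.symm⟩
    obtain ⟨w, hw⟩ := hsurj z
    exact ⟨Submodule.Quotient.mk w, by rwa [Submodule.liftQ_apply]⟩
end
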